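/- arXiv:1504.02273 — 8 statements merged into one kernel-verified Lean document; each statement's English description precedes it below -/
import Mathlib

section
/- For every η ∈ G₂ and for ν-almost every orbit C ∈ Q, the translate R_ημ_C is equivalent (mutually absolutely continuous) to μ_C — so the component measures μ_C of the disintegration are quasi-invariant under G₂ — and the Radon–Nikodym derivative d(R_ημ_C)/dμ_C coincides μ_C-almost everywhere with the restriction to the orbit C of the Radon–Nikodym derivative λ(·,η) = d(R_ημ)/dμ. -/
open MeasureTheory Set
open scoped ENNReal Pointwise

lemma aux_gps_countable {α : Type*} {S : Set (Set α)} (hS : S.Countable) :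
    (generatePiSystem S).Countable := by
  have hsub : generatePiSystem S ⊆ sInter '' {t | t.Finite ∧ t ⊆ S} := by
    intro s hs
    induction hs with
    | base h =>
      exact ⟨{_}, ⟨finite_singleton _, singleton_subset_iff.2 h⟩, sInter_singleton _⟩
    | inter hs ht hne ihs iht =>
      obtain ⟨F, ⟨hF1, hF2⟩, rfl⟩ := ihs
      obtain ⟨H, ⟨hH1, hH2⟩, rfl⟩ := iht
      exact ⟨F ∪ H, ⟨hF1.union hH1, union_subset hF2 hH2⟩, (sInter_union _ _)⟩
  exact ((countable_setOf_finite_subset hS).image _).mono hsub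

lemma aux_gps_subset {α : Type*} {S : Set (Set α)} {s : Set α}
    (hs : s ∈ generatePiSystem S) : ∃ t ∈ S, s ⊆ t := by
  induction hs with
  | base h => exact ⟨_, h, subset_rfl⟩
  | inter hs ht hne ihs iht =>
    obtain ⟨t, ht, hsub⟩ := ihs
    exact ⟨t, ht, (inter_subset_left).trans hsub⟩

lemma aux_sigmaFinite {α : Type*} [MeasurableSpace α] (m : Measure α) (f : α → ℝ≥0∞)
    (hf : AEMeasurable f m) (hpos : ∀ᵐ x ∂m, 0 < f x) (hint : ∫⁻ x, f x ∂m ≠ ∞) :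
    SigmaFinite m := by
  set N : Set α := toMeasurable m {x | ¬ 0 < f x} with hN
  have hNnull : m N = 0 := by
    rw [hN, measure_toMeasurable]
    simpa [ae_iff] using hpos
  refine ⟨⟨⟨fun n => {x | ((n : ℝ≥0∞) + 1)⁻¹ ≤ f x} ∪ N, fun _ => trivial, fun n => ?_, ?_⟩⟩⟩
  · have hle : m ({x | ((n : ℝ≥0∞) + 1)⁻¹ ≤ f x} ∪ N)
        ≤ (∫⁻ x, f x ∂m) / ((n : ℝ≥0∞) + 1)⁻¹ := by
      refine le_trans (measure_union_le _ _) ?_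
      rw [hNnull, add_zero]
      exact meas_ge_le_lintegral_div hf (by simp) (by simp [Nat.cast_add_one_ne_zero])
    exact lt_of_le_of_lt hle (ENNReal.div_lt_top hint (by simp))
  · refine eq_univ_of_forall fun x => ?_
    by_cases hx : 0 < f x
    · obtain ⟨n, hn⟩ := ENNReal.exists_inv_nat_lt hx.ne'
      refine mem_iUnion.2 ⟨n, Or.inl ?_⟩
      exact le_trans (ENNReal.inv_le_inv.2 (by exact_mod_cast le_of_lt (Nat.lt_succ_self n))) hn.le
    · exact mem_iUnion.2 ⟨0, Or.inr (subset_toMeasurable m _ hx)⟩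

theorem stmt0
    {G : Type*} [Group G] [TopologicalSpace G] [IsTopologicalGroup G]
    [LocallyCompactSpace G] [SecondCountableTopology G] [T2Space G]
    (G₁ G₂ : Subgroup G) (hG₁ : IsClosed (G₁ : Set G)) (hG₂ : IsClosed (G₂ : Set G))
    {X : Type*} [TopologicalSpace X] [TopologicalSpace.MetrizableSpace X]
    [LocallyCompactSpace X] [SecondCountableTopology X]
    [MeasurableSpace X] [BorelSpace X]
    (π : G → X) (hπc : Continuous π) (hπo : IsOpenMap π) (hπs : Function.Surjective π)
    (act : X → G → X) (hactc : Continuous fun q : X × G => act q.1 q.2)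
    (hact1 : ∀ x : X, act x 1 = x)
    (hactm : ∀ (x : X) (g g' : G), act (act x g) g' = act x (g * g'))
    (hπact : ∀ g g' : G, π (g * g') = act (π g) g')
    (hπker : ∀ g g' : G, π g = π g' ↔ ∃ h ∈ G₁, g' = h * g)
    (μ : Measure X) [SigmaFinite μ] [μ.Regular] (hμ : μ ≠ 0)
    (hqi : ∀ g : G, μ.map (fun x => act x (g⁻¹)) ≪ μ ∧ μ ≪ μ.map (fun x => act x (g⁻¹)))
    {Q : Type*} [MeasurableSpace Q]
    (p : X → Q) (hps : Function.Surjective p)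
    (hporb : ∀ x y : X, p x = p y ↔ ∃ η ∈ G₂, act x η = y)
    (hQσ : ∀ E : Set Q, MeasurableSet E ↔ MeasurableSet (p ⁻¹' E))
    (μ' : Measure X) [IsFiniteMeasure μ'] (hμ'₁ : μ' ≪ μ) (hμ'₂ : μ ≪ μ')
    (ν : Measure Q) (hν : ν = μ'.map p)
    (μC : Q → Measure X)
    (hconc : ∀ c : Q, μC c ((p ⁻¹' {c})ᶜ) = 0)
    (hdis : ∀ g : X → ℂ, Integrable g μ →
      (∀ᵐ c ∂ν, Integrable g (μC c)) ∧
      Integrable (fun c => ∫ x, g x ∂(μC c)) ν ∧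
      ∫ c, (∫ x, g x ∂(μC c)) ∂ν = ∫ x, g x ∂μ)
    :
    ∀ η : G, η ∈ G₂ →
      ∀ᵐ c ∂ν,
        ((μC c).map (fun x => act x (η⁻¹)) ≪ μC c ∧
          μC c ≪ (μC c).map (fun x => act x (η⁻¹))) ∧
        ∀ᵐ x ∂(μC c),
          ((μC c).map (fun x => act x (η⁻¹))).rnDeriv (μC c) x
            = (μ.map (fun x => act x (η⁻¹))).rnDeriv μ x := by
  intro η hη
  haveI : Nonempty X := by
    rcases isEmpty_or_nonempty X with h | h
    · exact absurd (by simp [Measure.eq_zero_of_isEmpty μ]) hμ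
    · exact h
  have hpm : Measurable p := fun E hE => (hQσ E).1 hE
  haveI : IsFiniteMeasure ν := by
    rw [hν]; exact Measure.isFiniteMeasure_map μ' p
  set T : X → X := fun x => act x (η⁻¹) with hTdef
  set S : X → X := fun x => act x η with hSdef
  have hTS : ∀ x, S (T x) = x := fun x => by simp [hTdef, hSdef, hactm, hact1]
  have hST : ∀ x, T (S x) = x := fun x => by simp [hTdef, hSdef, hactm, hact1]
  have hTc : Continuous T := hactc.comp (continuous_id.prodMk continuous_const)
  have hSc : Continuous S := hactc.comp (continuous_id.prodMk continuous_const)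
  have hTm : Measurable T := hTc.measurable
  have hSm : Measurable S := hSc.measurable
  have hpT : ∀ x, p (T x) = p x := by
    intro x
    exact (hporb (T x) x).2 ⟨η, hη, by simp [hTdef, hactm, hact1]⟩
  have hpTpre : ∀ E : Set Q, T ⁻¹' (p ⁻¹' E) = p ⁻¹' E := by
    intro E; ext x; simp [mem_preimage, hpT]
  set σm : Measure X := μ.map T with hσmdef
  haveI hσs : SigmaFinite σm := by
    have he : MeasurableEmbedding T :=
      (Homeomorph.mk ⟨T, S, hTS, hST⟩ hTc hSc).measurableEmbedding
    exact he.sigmaFinite_map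
  have hac1 : σm ≪ μ := (hqi η).1
  have hac2 : μ ≪ σm := (hqi η).2
  set lam : X → ℝ≥0∞ := σm.rnDeriv μ with hlamdef
  have hlamm : Measurable lam := Measure.measurable_rnDeriv _ _
  have hwd : μ.withDensity lam = σm := Measure.withDensity_rnDeriv_eq σm μ hac1
  have hpos : ∀ᵐ x ∂μ, 0 < lam x := Measure.rnDeriv_pos' hac2
  have hfin : ∀ᵐ x ∂μ, lam x < ∞ := Measure.rnDeriv_lt_top σm μ
  -- real-valued disintegration
  have hdisR : ∀ g : X → ℝ, Integrable g μ →
      (∀ᵐ c ∂ν, Integrable g (μC c)) ∧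
      Integrable (fun c => ∫ x, g x ∂(μC c)) ν ∧
      ∫ c, (∫ x, g x ∂(μC c)) ∂ν = ∫ x, g x ∂μ := by
    intro g hg
    obtain ⟨h1, h2, h3⟩ := hdis (fun x => (g x : ℂ)) hg.ofReal
    have hre : ∀ m : Measure X, Integrable (fun x => (g x : ℂ)) m → Integrable g m := by
      intro m hm
      simpa using hm.re
    refine ⟨h1.mono fun c hc => hre _ hc, ?_, ?_⟩
    · have heq : (fun c => ∫ x, (g x : ℂ) ∂(μC c))
          = fun c => ((∫ x, g x ∂(μC c) : ℝ) : ℂ) := by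
        funext c; exact integral_ofReal
      rw [heq] at h2
      simpa using h2.re
    · have heq : (fun c => ∫ x, (g x : ℂ) ∂(μC c))
          = fun c => ((∫ x, g x ∂(μC c) : ℝ) : ℂ) := by
        funext c; exact integral_ofReal
      rw [heq] at h3
      have e1 : ∫ c, ((∫ x, g x ∂(μC c) : ℝ) : ℂ) ∂ν
          = ((∫ c, (∫ x, g x ∂(μC c)) ∂ν : ℝ) : ℂ) := integral_ofReal
      have e2 : ∫ x, ((g x : ℝ) : ℂ) ∂μ = ((∫ x, g x ∂μ : ℝ) : ℂ) := integral_ofReal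
      exact_mod_cast (e1.symm.trans h3).trans e2
  -- null sets pass to the components
  have null_ae : ∀ N : Set X, MeasurableSet N → μ N = 0 → ∀ᵐ c ∂ν, μC c N = 0 := by
    intro N hNm hN0
    have hae0 : (N.indicator (fun _ => (1:ℝ))) =ᵐ[μ] 0 := by
      filter_upwards [measure_eq_zero_iff_ae_notMem.1 hN0] with x hx
      simp [indicator_of_notMem hx]
    have hgint : Integrable (N.indicator (fun _ => (1:ℝ))) μ :=
      (integrable_zero _ _ _).congr hae0.symm
    obtain ⟨h1, h2, h3⟩ := hdisR _ hgint
    have h4 : ∫ x, N.indicator (fun _ => (1:ℝ)) x ∂μ = 0 := by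
      rw [integral_congr_ae hae0]; simp
    rw [h4] at h3
    have h5 : ∀ᵐ c ∂ν, ∫ x, N.indicator (fun _ => (1:ℝ)) x ∂(μC c) = 0 := by
      have hnn : 0 ≤ᵐ[ν] fun c => ∫ x, N.indicator (fun _ => (1:ℝ)) x ∂(μC c) :=
        Filter.Eventually.of_forall fun c =>
          integral_nonneg fun x => Set.indicator_nonneg (fun _ _ => zero_le_one) x
      exact (integral_eq_zero_iff_of_nonneg_ae hnn h2).1 h3
    filter_upwards [h1, h5] with c hc1 hc5
    have : (N.indicator (fun _ => (1:ℝ))) =ᵐ[μC c] 0 :=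
      (integral_eq_zero_iff_of_nonneg_ae
        (Filter.Eventually.of_forall fun x => Set.indicator_nonneg (fun _ _ => zero_le_one) x)
        hc1).1 hc5
    have hset : {x | N.indicator (fun _ => (1:ℝ)) x ≠ 0} = N := by
      ext x; by_cases hx : x ∈ N <;> simp [hx]
    have := this
    rw [Filter.EventuallyEq, ae_iff] at this
    simpa [hset] using this
  -- lintegral identity on components
  have lint_ae : ∀ f : X → ℝ≥0∞, Measurable f → ∫⁻ x, f x ∂μ ≠ ∞ →
      ∀ᵐ c ∂ν, ∫⁻ x, f x ∂(μC c) = ENNReal.ofReal (∫ x, (f x).toReal ∂(μC c)) := by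
    intro f hfm hfint
    have hNm : MeasurableSet {x | f x = ∞} := hfm (measurableSet_singleton _)
    have hN0 : μ {x | f x = ∞} = 0 := by
      have := ae_lt_top hfm hfint
      rw [ae_iff] at this
      simpa [lt_top_iff_ne_top] using this
    have hg : Integrable (fun x => (f x).toReal) μ :=
      integrable_toReal_of_lintegral_ne_top hfm.aemeasurable hfint
    obtain ⟨h1, _, _⟩ := hdisR _ hg
    filter_upwards [h1, null_ae _ hNm hN0] with c hc1 hc4
    have hae : ∀ᵐ x ∂(μC c), f x ≠ ∞ := by
      rw [ae_iff]; simpa using hc4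
    rw [ofReal_integral_eq_lintegral_ofReal hc1
      (Filter.Eventually.of_forall fun x => ENNReal.toReal_nonneg)]
    refine lintegral_congr_ae ?_
    filter_upwards [hae] with x hx
    rw [ENNReal.ofReal_toReal hx]
  -- σ-finiteness of components
  set w : X → ℝ≥0∞ := μ'.rnDeriv μ with hwdef
  have hwm : Measurable w := Measure.measurable_rnDeriv _ _
  have hwint : ∫⁻ x, w x ∂μ ≠ ∞ := by
    have : μ.withDensity w = μ' := Measure.withDensity_rnDeriv_eq μ' μ hμ'₁
    have h2 : ∫⁻ x, w x ∂μ = μ' univ := by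
      rw [← this, withDensity_apply _ MeasurableSet.univ, setLIntegral_univ]
    rw [h2]
    exact (measure_lt_top μ' univ).ne
  have hwpos : ∀ᵐ x ∂μ, 0 < w x := Measure.rnDeriv_pos' hμ'₂
  have hwposN : μ {x | ¬ 0 < w x} = 0 := by
    have := hwpos; rwa [ae_iff] at this
  have hwposNm : MeasurableSet {x | ¬ 0 < w x} := by
    have : {x | ¬ 0 < w x} = w ⁻¹' {0} := by
      ext x; simp [pos_iff_ne_zero]
    rw [this]; exact hwm (measurableSet_singleton _)
  have hsig : ∀ᵐ c ∂ν, SigmaFinite (μC c) := by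
    filter_upwards [lint_ae w hwm hwint, null_ae _ hwposNm hwposN] with c hc1 hc2
    refine aux_sigmaFinite (μC c) w hwm.aemeasurable ?_ (by rw [hc1]; exact ENNReal.ofReal_ne_top)
    rw [ae_iff]; simpa using hc2
  -- key identity
  have key : ∀ s : Set X, MeasurableSet s → σm s ≠ ∞ →
      ∀ᵐ c ∂ν, μC c (T ⁻¹' s) = ∫⁻ x in s, lam x ∂(μC c) ∧ μC c (T ⁻¹' s) ≠ ∞ := by
    intro s hs hsfin
    have hTs : MeasurableSet (T ⁻¹' s) := hTm hs
    have hμTs : μ (T ⁻¹' s) = σm s := (Measure.map_apply hTm hs).symm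
    -- the two test functions
    set g1 : X → ℝ := (T ⁻¹' s).indicator (fun _ => (1:ℝ)) with hg1def
    set g2 : X → ℝ := s.indicator (fun x => (lam x).toReal) with hg2def
    have hg1int : Integrable g1 μ := by
      rw [hg1def, integrable_indicator_iff hTs]
      exact (integrableOn_const_iff (by simp)).2 (Or.inr (by rw [hμTs]; exact hsfin.lt_top))
    have hlint2 : ∀ u : Set X, MeasurableSet u → u ⊆ s →
        ∫⁻ x, u.indicator lam x ∂μ = σm u := by
      intro u hu _
      rw [lintegral_indicator hu lam, ← withDensity_apply _ hu, hwd]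
    have hg2int : Integrable g2 μ := by
      have h1 : Integrable (fun x => (s.indicator lam x).toReal) μ := by
        refine integrable_toReal_of_lintegral_ne_top (hlamm.indicator hs).aemeasurable ?_
        rw [hlint2 s hs subset_rfl]; exact hsfin
      refine h1.congr (Filter.Eventually.of_forall fun x => ?_)
      by_cases hx : x ∈ s <;> simp [hg2def, hx]
    obtain ⟨hd11, hd12, _⟩ := hdisR g1 hg1int
    obtain ⟨hd21, hd22, _⟩ := hdisR g2 hg2int
    -- set integral equality over ν
    have hsetint : ∀ E : Set Q, MeasurableSet E →
        ∫ c in E, (∫ x, g1 x ∂(μC c)) ∂ν = ∫ c in E, (∫ x, g2 x ∂(μC c)) ∂ν := by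
      intro E hE
      have hpE : MeasurableSet (p ⁻¹' E) := hpm hE
      -- localized test functions
      have hcomm : ∀ (g : X → ℝ) (c : Q),
          ∫ x, (p ⁻¹' E).indicator g x ∂(μC c) = E.indicator (fun c' => ∫ x, g x ∂(μC c')) c := by
        intro g c
        by_cases hc : c ∈ E
        · rw [indicator_of_mem hc]
          refine integral_congr_ae ?_
          have hnull : μC c ((p ⁻¹' E)ᶜ) = 0 := by
            refine measure_mono_null ?_ (hconc c)
            intro x hx
            simp only [mem_compl_iff, mem_preimage, mem_singleton_iff] at *
            exact fun h => hx (h ▸ hc)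
          filter_upwards [measure_eq_zero_iff_ae_notMem.1 hnull] with x hx
          simp only [mem_compl_iff, not_not] at hx
          rw [indicator_of_mem hx]
        · rw [indicator_of_notMem hc]
          have hnull : μC c (p ⁻¹' E) = 0 := by
            refine measure_mono_null ?_ (hconc c)
            intro x hx
            simp only [mem_compl_iff, mem_preimage, mem_singleton_iff] at *
            exact fun h => hc (h ▸ hx)
          have : (p ⁻¹' E).indicator g =ᵐ[μC c] 0 := by
            filter_upwards [measure_eq_zero_iff_ae_notMem.1 hnull] with x hx
            simp [indicator_of_notMem hx]
          rw [integral_congr_ae this]; simp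
      have hint1 : Integrable ((p ⁻¹' E).indicator g1) μ := hg1int.indicator hpE
      have hint2 : Integrable ((p ⁻¹' E).indicator g2) μ := hg2int.indicator hpE
      obtain ⟨_, _, he1⟩ := hdisR _ hint1
      obtain ⟨_, _, he2⟩ := hdisR _ hint2
      -- compute both μ-integrals
      have hi1 : ∫ x, (p ⁻¹' E).indicator g1 x ∂μ = (μ (T ⁻¹' s ∩ p ⁻¹' E)).toReal := by
        have : (p ⁻¹' E).indicator g1 = (T ⁻¹' s ∩ p ⁻¹' E).indicator (fun _ => (1:ℝ)) := by
          funext x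
          by_cases h1 : x ∈ T ⁻¹' s <;> by_cases h2 : x ∈ p ⁻¹' E <;>
            simp [hg1def, h1, h2, indicator_of_mem, indicator_of_notMem]
        rw [this]
        exact integral_indicator_one (hTs.inter hpE)
      have hi2 : ∫ x, (p ⁻¹' E).indicator g2 x ∂μ = (μ (T ⁻¹' s ∩ p ⁻¹' E)).toReal := by
        have heq : (p ⁻¹' E).indicator g2 = fun x => ((s ∩ p ⁻¹' E).indicator lam x).toReal := by
          funext x
          by_cases h1 : x ∈ s <;> by_cases h2 : x ∈ p ⁻¹' E <;>
            simp [hg2def, h1, h2, indicator_of_mem, indicator_of_notMem]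
        rw [heq, integral_toReal ((hlamm.indicator (hs.inter hpE)).aemeasurable) ?hfin]
        case hfin =>
          filter_upwards [hfin] with x hx
          by_cases hxs : x ∈ s ∩ p ⁻¹' E
          · rwa [indicator_of_mem hxs]
          · rw [indicator_of_notMem hxs]; exact ENNReal.zero_lt_top
        congr 1
        rw [hlint2 (s ∩ p ⁻¹' E) (hs.inter hpE) inter_subset_left]
        rw [hσmdef, Measure.map_apply hTm (hs.inter hpE), preimage_inter, hpTpre]
      -- assemble
      have heq1 : (fun c => ∫ x, (p ⁻¹' E).indicator g1 x ∂(μC c))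
          = E.indicator (fun c' => ∫ x, g1 x ∂(μC c')) := funext fun c => hcomm g1 c
      have heq2 : (fun c => ∫ x, (p ⁻¹' E).indicator g2 x ∂(μC c))
          = E.indicator (fun c' => ∫ x, g2 x ∂(μC c')) := funext fun c => hcomm g2 c
      rw [heq1, integral_indicator hE] at he1
      rw [heq2, integral_indicator hE] at he2
      rw [he1, he2, hi1, hi2]
    have haeeq : (fun c => ∫ x, g1 x ∂(μC c)) =ᵐ[ν] (fun c => ∫ x, g2 x ∂(μC c)) :=
      Integrable.ae_eq_of_forall_setIntegral_eq _ _ hd12 hd22 fun E hE _ => hsetint E hE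
    have hNlamm : MeasurableSet {x | lam x = ∞} := hlamm (measurableSet_singleton _)
    have hNlam0 : μ {x | lam x = ∞} = 0 := by
      have := hfin; rw [ae_iff] at this
      simpa [lt_top_iff_ne_top] using this
    filter_upwards [haeeq, hd11, hd21, null_ae _ hNlamm hNlam0] with c hc hc1 hc2 hc4
    have hfinTs : μC c (T ⁻¹' s) ≠ ∞ := by
      rw [hg1def, integrable_indicator_iff hTs] at hc1
      rcases (integrableOn_const_iff (by simp)).1 hc1 with h | h
      · norm_num at h
      · exact h.ne
    have hLHS : ENNReal.ofReal (∫ x, g1 x ∂(μC c)) = μC c (T ⁻¹' s) := by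
      have h1 : ∫ x, g1 x ∂(μC c) = (μC c (T ⁻¹' s)).toReal :=
        integral_indicator_one hTs
      rw [h1, ENNReal.ofReal_toReal hfinTs]
    have hRHS : ENNReal.ofReal (∫ x, g2 x ∂(μC c)) = ∫⁻ x in s, lam x ∂(μC c) := by
      rw [ofReal_integral_eq_lintegral_ofReal hc2
        (Filter.Eventually.of_forall fun x => ?nn)]
      case nn =>
        rw [hg2def]
        exact Set.indicator_nonneg (fun _ _ => ENNReal.toReal_nonneg) x
      rw [← lintegral_indicator hs lam]
      refine lintegral_congr_ae ?_
      have hae : ∀ᵐ x ∂(μC c), lam x ≠ ∞ := by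
        rw [ae_iff]; simpa using hc4
      filter_upwards [hae] with x hx
      by_cases hxs : x ∈ s <;>
        simp [hg2def, hxs, indicator_of_mem, indicator_of_notMem, ENNReal.ofReal_toReal hx]
    refine ⟨?_, hfinTs⟩
    rw [← hLHS, ← hRHS, hc]
  -- basis of relatively compact open sets
  obtain ⟨b, hbc, -, hbbasis⟩ := TopologicalSpace.exists_countable_basis X
  set S0 : Set (Set X) := {s ∈ b | IsCompact (closure s)} with hS0def
  have hS0basis : TopologicalSpace.IsTopologicalBasis S0 := by
    refine TopologicalSpace.isTopologicalBasis_of_isOpen_of_nhds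
      (fun u hu => hbbasis.isOpen hu.1) ?_
    intro a u hau hu
    obtain ⟨K, hKc, hKnhds⟩ := exists_compact_mem_nhds a
    obtain ⟨v, hvb, hav, hvsub⟩ := hbbasis.exists_subset_of_mem_open
      (show a ∈ u ∩ interior K from ⟨hau, mem_interior_iff_mem_nhds.2 hKnhds⟩)
      (hu.inter isOpen_interior)
    refine ⟨v, ⟨hvb, ?_⟩, hav, hvsub.trans inter_subset_left⟩
    refine IsCompact.of_isClosed_subset hKc isClosed_closure ?_
    exact closure_minimal (hvsub.trans (inter_subset_right.trans interior_subset)) hKc.isClosed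
  have hS0c : S0.Countable := hbc.mono (sep_subset _ _)
  have hS0union : ⋃₀ S0 = univ := hS0basis.sUnion_eq
  have hS0ne : S0.Nonempty := by
    obtain ⟨x⟩ := ‹Nonempty X›
    have : x ∈ ⋃₀ S0 := hS0union ▸ mem_univ x
    obtain ⟨s, hsS, -⟩ := this
    exact ⟨s, hsS⟩
  obtain ⟨B, hB⟩ := hS0c.exists_eq_range hS0ne
  have hS0meas : ∀ s ∈ S0, MeasurableSet s := fun s hs => (hbbasis.isOpen hs.1).measurableSet
  have hS0fin : ∀ s ∈ S0, σm s ≠ ∞ := by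
    intro s hs
    have h1 : σm (closure s) ≠ ∞ := by
      rw [hσmdef, Measure.map_apply hTm isClosed_closure.measurableSet]
      have himg : T ⁻¹' closure s = S '' closure s := by
        ext x
        constructor
        · intro hx; exact ⟨T x, hx, hTS x⟩
        · rintro ⟨y, hy, rfl⟩; rwa [mem_preimage, hST]
      rw [himg]
      exact (IsCompact.measure_lt_top (hs.2.image hSc)).ne
    exact fun h => h1 (eq_top_iff.2 (h ▸ measure_mono subset_closure))
  have hgpsmeas : ∀ s ∈ generatePiSystem S0, MeasurableSet s := fun s hs =>
    generatePiSystem_measurableSet hS0meas s hs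
  have hgpsfin : ∀ s ∈ generatePiSystem S0, σm s ≠ ∞ := by
    intro s hs
    obtain ⟨t, htS0, hsub⟩ := aux_gps_subset hs
    exact fun h => (hS0fin t htS0) (eq_top_iff.2 (h ▸ measure_mono hsub))
  have hCc : (generatePiSystem S0).Countable := aux_gps_countable hS0c
  have hkeyC : ∀ᵐ c ∂ν, ∀ s ∈ generatePiSystem S0,
      μC c (T ⁻¹' s) = ∫⁻ x in s, lam x ∂(μC c) ∧ μC c (T ⁻¹' s) ≠ ∞ := by
    rw [ae_ball_iff hCc]
    intro s hs
    exact key s (hgpsmeas s hs) (hgpsfin s hs)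
  have hmeq : ∀ᵐ c ∂ν, (μC c).map T = (μC c).withDensity lam := by
    filter_upwards [hkeyC] with c hc
    have hA : ‹MeasurableSpace X› = MeasurableSpace.generateFrom (generatePiSystem S0) := by
      rw [generateFrom_generatePiSystem_eq, ← hS0basis.borel_eq_generateFrom]
      exact BorelSpace.measurable_eq
    refine Measure.ext_of_generateFrom_of_iUnion (generatePiSystem S0) B hA
      (isPiSystem_generatePiSystem S0) ?_ ?_ ?_ ?_
    · rw [← sUnion_range, ← hB, hS0union]
    · intro i
      exact generatePiSystem.base (hB ▸ mem_range_self i)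
    · intro i
      have hBi : B i ∈ generatePiSystem S0 := generatePiSystem.base (hB ▸ mem_range_self i)
      rw [Measure.map_apply hTm (hgpsmeas _ hBi)]
      exact (hc _ hBi).2
    · intro s hs
      rw [Measure.map_apply hTm (hgpsmeas s hs), withDensity_apply _ (hgpsmeas s hs)]
      exact (hc s hs).1
  have hposNm : MeasurableSet {x | lam x = 0} := hlamm (measurableSet_singleton _)
  have hposN0 : μ {x | lam x = 0} = 0 := by
    have := hpos; rw [ae_iff] at this
    simpa [not_lt, nonpos_iff_eq_zero] using this
  filter_upwards [hmeq, hsig, null_ae _ hposNm hposN0] with c hc hsigc hz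
  haveI := hsigc
  constructor
  · constructor
    · rw [hc]; exact withDensity_absolutelyContinuous _ _
    · rw [hc]
      refine withDensity_absolutelyContinuous' hlamm.aemeasurable ?_
      rw [ae_iff]; simpa using hz
  · rw [hc]
    exact Measure.rnDeriv_withDensity (μC c) hlamm
end

section
/- There exist a Borel set B ⊆ X and a μ-negligible subset N₀ ⊆ X which is a union of G₂-orbits, such that B intersects every G₂-orbit not contained in N₀ in exactly one point. -/
open MeasureTheory Set
open scoped ENNReal Pointwise
open scoped symmDiff

open Classical in
private noncomputable def FMF {X Y : Type*} (g : X → Y) (M : Set X) (u : ℕ → Set X) :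
    ℕ → Y → Set X
  | 0 => fun t => M ∩ g ⁻¹' {t}
  | (n+1) => fun t =>
      if ((FMF g M u n t) \ u n).Nonempty then (FMF g M u n t) \ u n else FMF g M u n t

private theorem FM_selection {X : Type*} [TopologicalSpace X] [T2Space X]
    [SecondCountableTopology X] [MeasurableSpace X] [BorelSpace X]
    {Y : Type*} [TopologicalSpace Y] [T2Space Y] [MeasurableSpace Y] [OpensMeasurableSpace Y]
    (g : X → Y) (hg : Measurable g) (M : Set X) (hM : IsCompact M) (hgc : ContinuousOn g M) :
    ∃ S : Set X, MeasurableSet S ∧ S ⊆ M ∧ ∀ x ∈ M, ∃! y, y ∈ S ∧ g y = g x := by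
  classical
  rcases isEmpty_or_nonempty X with hX | hX
  · exact ⟨∅, MeasurableSet.empty, empty_subset _, fun x hx => (IsEmpty.false x).elim⟩
  -- enumerate a basis together with ∅
  have hcount : (insert (∅ : Set X) (TopologicalSpace.countableBasis X)).Countable :=
    (TopologicalSpace.countable_countableBasis X).insert _
  obtain ⟨u, hu⟩ := Set.Countable.exists_eq_range hcount ⟨∅, mem_insert _ _⟩
  have huopen : ∀ n, IsOpen (u n) := by
    intro n
    have : u n ∈ insert (∅ : Set X) (TopologicalSpace.countableBasis X) := by
      rw [hu]; exact mem_range_self n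
    rcases this with h | h
    · simp [h]
    · exact TopologicalSpace.isOpen_of_mem_countableBasis h
  have husep : ∀ x y : X, x ≠ y → ∃ n, x ∈ u n ∧ y ∉ u n := by
    intro x y hxy
    obtain ⟨V, W, hV, hW, hxV, hyW, hVW⟩ := t2_separation hxy
    obtain ⟨v, hvB, hxv, hvV⟩ :=
      (TopologicalSpace.isBasis_countableBasis X).exists_subset_of_mem_open hxV hV
    have : v ∈ insert (∅ : Set X) (TopologicalSpace.countableBasis X) := mem_insert_of_mem _ hvB
    rw [hu] at this
    obtain ⟨n, hn⟩ := this
    refine ⟨n, hn ▸ hxv, fun hyn => ?_⟩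
    have : y ∈ V := hvV (hn ▸ hyn)
    exact (disjoint_left.1 hVW this) hyW
  set F := FMF g M u with hF
  have hF0 : ∀ t, F 0 t = M ∩ g ⁻¹' {t} := fun t => rfl
  have hFsucc : ∀ n t, F (n+1) t =
      if ((F n t) \ u n).Nonempty then (F n t) \ u n else F n t := fun n t => rfl
  -- closedness / inclusion in M
  have hMclosed : IsClosed M := hM.isClosed
  have hFcl : ∀ n t, F n t ⊆ M ∧ IsClosed (F n t) := by
    intro n
    induction n with
    | zero =>
      intro t
      exact ⟨inter_subset_left, hgc.preimage_isClosed_of_isClosed hMclosed isClosed_singleton⟩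
    | succ n ih =>
      intro t
      rw [hFsucc]
      split_ifs with h
      · exact ⟨diff_subset.trans (ih t).1, (ih t).2.sdiff (huopen n)⟩
      · exact ih t
  have hFcompact : ∀ n t, IsCompact (F n t) :=
    fun n t => hM.of_isClosed_subset (hFcl n t).2 (hFcl n t).1
  have hFmono : ∀ n t, F (n+1) t ⊆ F n t := by
    intro n t; rw [hFsucc]; split_ifs with h
    · exact diff_subset
    · exact subset_rfl
  have hFne : ∀ n t, (F 0 t).Nonempty → (F n t).Nonempty := by
    intro n t h
    induction n with
    | zero => exact h
    | succ n ih =>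
      rw [hFsucc]
      split_ifs with h'
      · exact h'
      · exact ih
  -- the G sets and their measurability
  set Gs : ℕ → Set X → Set Y := fun n W => {t | ((F n t) \ W).Nonempty} with hGs
  have hGmeas : ∀ n W, IsOpen W → MeasurableSet (Gs n W) := by
    intro n
    induction n with
    | zero =>
      intro W hW
      have : Gs 0 W = g '' (M \ W) := by
        ext t
        simp only [hGs, mem_setOf_eq, mem_image, hF0]
        constructor
        · rintro ⟨x, ⟨⟨hxM, hxt⟩, hxW⟩⟩
          exact ⟨x, ⟨hxM, hxW⟩, hxt⟩
        · rintro ⟨x, ⟨hxM, hxW⟩, hxt⟩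
          exact ⟨x, ⟨⟨hxM, hxt⟩, hxW⟩⟩
      rw [this]
      exact (((hM.diff hW).image_of_continuousOn (hgc.mono diff_subset)).isClosed).measurableSet
    | succ n ih =>
      intro W hW
      have : Gs (n+1) W = (Gs n (u n) ∩ Gs n (u n ∪ W)) ∪ (Gs n W \ Gs n (u n)) := by
        ext t
        simp only [hGs, mem_setOf_eq, mem_union, mem_inter_iff, mem_diff]
        rw [hFsucc n t]
        by_cases h : ((F n t) \ u n).Nonempty
        · rw [if_pos h, diff_diff]
          simp [h]
        · rw [if_neg h]
          simp [h]
      rw [this]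
      exact ((ih _ (huopen n)).inter (ih _ ((huopen n).union hW))).union
        ((ih _ hW).diff (ih _ (huopen n)))
  -- the sections S n and S
  have hSmeas : ∀ n, MeasurableSet {x | x ∈ M ∧ x ∈ F n (g x)} := by
    intro n
    induction n with
    | zero =>
      have : {x | x ∈ M ∧ x ∈ F 0 (g x)} = M := by
        ext x; simp [hF0]
      rw [this]; exact hMclosed.measurableSet
    | succ n ih =>
      have : {x | x ∈ M ∧ x ∈ F (n+1) (g x)} =
          ({x | x ∈ M ∧ x ∈ F n (g x)} ∩ g ⁻¹' (Gs n (u n)) ∩ (u n)ᶜ) ∪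
          ({x | x ∈ M ∧ x ∈ F n (g x)} \ g ⁻¹' (Gs n (u n))) := by
        ext x
        simp only [mem_union, mem_inter_iff, mem_diff, mem_setOf_eq, mem_compl_iff,
          mem_preimage, hGs, mem_setOf_eq]
        rw [hFsucc n (g x)]
        by_cases h : ((F n (g x)) \ u n).Nonempty
        · rw [if_pos h]
          simp only [mem_diff]
          tauto
        · rw [if_neg h]
          tauto
      rw [this]
      exact ((ih.inter (hg (hGmeas n _ (huopen n)))).inter
        (huopen n).isClosed_compl.measurableSet).union (ih.diff (hg (hGmeas n _ (huopen n))))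
  refine ⟨⋂ n, {x | x ∈ M ∧ x ∈ F n (g x)}, MeasurableSet.iInter hSmeas, ?_, ?_⟩
  · intro x hx
    exact (mem_iInter.1 hx 0).1
  · intro x hxM
    -- the intersection of the fibers is a single point
    have h0ne : (F 0 (g x)).Nonempty := ⟨x, hxM, rfl⟩
    have hne : (⋂ n, F n (g x)).Nonempty := by
      apply IsCompact.nonempty_iInter_of_sequence_nonempty_isCompact_isClosed
      · exact fun n => hFmono n (g x)
      · exact fun n => hFne n (g x) h0ne
      · exact hFcompact 0 (g x)
      · exact fun n => (hFcl n (g x)).2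
    obtain ⟨s, hs⟩ := hne
    have hsF : ∀ n, s ∈ F n (g x) := fun n => mem_iInter.1 hs n
    have hsM : s ∈ M := (hsF 0).1
    have hgs : g s = g x := (hsF 0).2
    -- uniqueness of points in the full intersection
    have huniq : ∀ y z : X, (∀ n, y ∈ F n (g x)) → (∀ n, z ∈ F n (g x)) → y = z := by
      intro y z hy hz
      by_contra hyz
      obtain ⟨n, hyn, hzn⟩ := husep y z hyz
      have hnonempty : ((F n (g x)) \ u n).Nonempty := ⟨z, hz n, hzn⟩
      have : y ∈ F (n+1) (g x) := hy (n+1)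
      rw [hFsucc, if_pos hnonempty] at this
      exact this.2 hyn
    refine ⟨s, ⟨?_, hgs⟩, ?_⟩
    · exact mem_iInter.2 fun n => ⟨hsM, by rw [hgs]; exact hsF n⟩
    · rintro y ⟨hyS, hgy⟩
      have hy : ∀ n, y ∈ F n (g x) := fun n => by
        have := (mem_iInter.1 hyS n).2
        rwa [hgy] at this
      exact huniq y s hy hsF

private theorem compact_cont {X : Type*} [TopologicalSpace X] [T2Space X] [MeasurableSpace X]
    [BorelSpace X] (μ : MeasureTheory.Measure X) [μ.Regular] (C : ℕ → Set X)
    (hC : ∀ n, MeasurableSet (C n))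
    (P : Set X) (hP : MeasurableSet P) (hPfin : μ P ≠ ∞) {ε : ℝ≥0∞} (hε : ε ≠ 0) :
    ∃ M, IsCompact M ∧ M ⊆ P ∧ μ (P \ M) ≤ ε ∧
      ContinuousOn (fun x (n : ℕ) => (C n).boolIndicator x) M := by
  classical
  have hhalf : ε / 2 ≠ 0 := by
    simp [ENNReal.div_eq_zero_iff, hε]
  obtain ⟨K, hKP, hKc, hKlt⟩ := hP.exists_isCompact_diff_lt hPfin hhalf
  have hKmeas : MeasurableSet K := hKc.isClosed.measurableSet
  have hKfin : μ K ≠ ∞ := (lt_of_le_of_lt (measure_mono hKP) hPfin.lt_top).ne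
  obtain ⟨δ, hδpos, hδsum⟩ := ENNReal.exists_pos_sum_of_countable' hhalf (ℕ × Bool)
  have h1 : ∀ n : ℕ, ∃ K1, K1 ⊆ K ∩ C n ∧ IsCompact K1 ∧ μ ((K ∩ C n) \ K1) < δ (n, true) :=
    fun n => (hKmeas.inter (hC n)).exists_isCompact_diff_lt
      ((lt_of_le_of_lt (measure_mono inter_subset_left) hKfin.lt_top).ne) (hδpos (n, true)).ne'
  have h2 : ∀ n : ℕ, ∃ K2, K2 ⊆ K \ C n ∧ IsCompact K2 ∧ μ ((K \ C n) \ K2) < δ (n, false) :=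
    fun n => (hKmeas.diff (hC n)).exists_isCompact_diff_lt
      ((lt_of_le_of_lt (measure_mono diff_subset) hKfin.lt_top).ne) (hδpos (n, false)).ne'
  choose K1 hK1sub hK1c hK1μ using h1
  choose K2 hK2sub hK2c hK2μ using h2
  set M : Set X := K ∩ ⋂ n, (K1 n ∪ K2 n) with hM
  have hMK : M ⊆ K := inter_subset_left
  have hMc : IsCompact M :=
    hKc.inter_right (isClosed_iInter fun n => ((hK1c n).isClosed.union (hK2c n).isClosed))
  have hMCn : ∀ n, ∀ x ∈ M, (x ∈ C n ↔ x ∈ K1 n) ∧ (x ∈ C n ↔ x ∉ K2 n) := by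
    intro n x hx
    have hx12 : x ∈ K1 n ∪ K2 n := mem_iInter.1 hx.2 n
    have hnot : x ∈ K2 n → x ∉ C n := fun h => (hK2sub n h).2
    have hK1C : x ∈ K1 n → x ∈ C n := fun h => (hK1sub n h).2
    constructor
    · constructor
      · intro hxC
        rcases hx12 with h | h
        · exact h
        · exact absurd hxC (hnot h)
      · exact hK1C
    · constructor
      · intro hxC h
        exact hnot h hxC
      · intro h
        rcases hx12 with h' | h'
        · exact hK1C h'
        · exact absurd h' h
  refine ⟨M, hMc, hMK.trans hKP, ?_, ?_⟩
  · -- measure bound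
    have hsub : P \ M ⊆ (P \ K) ∪ ⋃ n, (((K ∩ C n) \ K1 n) ∪ ((K \ C n) \ K2 n)) := by
      intro x hx
      by_cases hxK : x ∈ K
      · right
        have : x ∉ ⋂ n, (K1 n ∪ K2 n) := fun h => hx.2 ⟨hxK, h⟩
        obtain ⟨n, hn⟩ : ∃ n, x ∉ K1 n ∪ K2 n := by
          by_contra h
          push_neg at h
          exact this (mem_iInter.2 h)
        refine mem_iUnion.2 ⟨n, ?_⟩
        rw [mem_union] at hn
        push_neg at hn
        by_cases hxC : x ∈ C n
        · exact Or.inl ⟨⟨hxK, hxC⟩, hn.1⟩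
        · exact Or.inr ⟨⟨hxK, hxC⟩, hn.2⟩
      · exact Or.inl ⟨hx.1, hxK⟩
    calc μ (P \ M) ≤ μ (P \ K) + μ (⋃ n, (((K ∩ C n) \ K1 n) ∪ ((K \ C n) \ K2 n))) :=
          le_trans (measure_mono hsub) (measure_union_le _ _)
      _ ≤ ε / 2 + ∑' n : ℕ, (δ (n, true) + δ (n, false)) := by
          refine add_le_add hKlt.le ?_
          refine le_trans (measure_iUnion_le _) (ENNReal.tsum_le_tsum fun n => ?_)
          exact le_trans (measure_union_le _ _)
            (add_le_add (hK1μ n).le (hK2μ n).le)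
      _ ≤ ε / 2 + ε / 2 := by
          refine add_le_add le_rfl ?_
          calc ∑' n : ℕ, (δ (n, true) + δ (n, false))
              = ∑' n : ℕ, ∑' b : Bool, δ (n, b) := by
                refine tsum_congr fun n => ?_
                rw [tsum_bool]
                exact (add_comm _ _)
            _ = ∑' p : ℕ × Bool, δ (p.1, p.2) :=
                (ENNReal.tsum_prod (f := fun n b => δ (n, b))).symm
            _ = ∑' p : ℕ × Bool, δ p := by simp
            _ ≤ ε / 2 := hδsum.le
      _ = ε := ENNReal.add_halves ε
  · -- continuity
    rw [continuousOn_iff_continuous_restrict]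
    refine continuous_pi fun n => ?_
    have : Continuous (M.restrict ((C n).boolIndicator)) := by
      refine continuousOn_iff_continuous_restrict.1 ?_
      rw [continuousOn_boolIndicator_iff_isClopen]
      constructor
      · have : (Subtype.val ⁻¹' C n : Set M) = (Subtype.val ⁻¹' K1 n : Set M) := by
          ext ⟨x, hx⟩
          exact (hMCn n x hx).1
        rw [this]
        exact (hK1c n).isClosed.preimage continuous_subtype_val
      · have : (Subtype.val ⁻¹' C n : Set M) = (Subtype.val ⁻¹' (K2 n)ᶜ : Set M) := by
          ext ⟨x, hx⟩
          exact (hMCn n x hx).2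
        rw [this]
        exact ((hK2c n).isClosed.isOpen_compl).preimage continuous_subtype_val
    exact this

private theorem main_aux {X : Type*} [TopologicalSpace X] [T2Space X]
    [SecondCountableTopology X] [MeasurableSpace X] [BorelSpace X]
    (μ : Measure X) [SigmaFinite μ] [μ.Regular]
    (orb : X → Set X)
    (hmem : ∀ x, x ∈ orb x)
    (hsymm : ∀ x y, y ∈ orb x → x ∈ orb y)
    (htrans : ∀ x y z, y ∈ orb x → z ∈ orb y → z ∈ orb x)
    (B : ℕ → Set X) (hBnm : ∀ i : ℕ, NullMeasurableSet (B i) μ)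
    (hBinv : ∀ i x, x ∈ B i → orb x ⊆ B i)
    (hB0 : μ (B 0) = 0)
    (hBsep : ∀ x : X, ¬ (orb x ⊆ B 0) →
      orb x = ⋂ i ∈ {i : ℕ | 1 ≤ i ∧ orb x ⊆ B i}, B i) :
    ∃ Bsec N₀ : Set X,
      MeasurableSet Bsec ∧ μ N₀ = 0 ∧ (∀ x ∈ N₀, orb x ⊆ N₀) ∧
      ∀ x : X, ¬ (orb x ⊆ N₀) → ∃! y : X, y ∈ Bsec ∩ orb x := by
  classical
  have hBiff : ∀ (i : ℕ) (x y : X), y ∈ orb x → (x ∈ B i ↔ y ∈ B i) := fun i x y hy =>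
    ⟨fun hx => hBinv i x hx hy, fun hyB => hBinv i y hyB (hsymm x y hy)⟩
  have hkey : ∀ x y : X, x ∉ B 0 → y ∉ B 0 → (∀ i, x ∈ B i ↔ y ∈ B i) → y ∈ orb x := by
    intro x y hx0 hy0 hiff
    have ex := hBsep x (fun h => hx0 (h (hmem x)))
    have ey := hBsep y (fun h => hy0 (h (hmem y)))
    have hsets : {i : ℕ | 1 ≤ i ∧ orb x ⊆ B i} = {i : ℕ | 1 ≤ i ∧ orb y ⊆ B i} := by
      ext i
      simp only [mem_setOf_eq]
      have : orb x ⊆ B i ↔ orb y ⊆ B i := by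
        constructor
        · intro h
          exact hBinv i y ((hiff i).1 (h (hmem x)))
        · intro h
          exact hBinv i x ((hiff i).2 (h (hmem y)))
      tauto
    have hxy : orb x = orb y := by rw [ex, ey, hsets]
    rw [hxy]
    exact hmem y
  -- Borel versions of the B i
  set C : ℕ → Set X := fun i => toMeasurable μ (B i) with hCdef
  have hCmeas : ∀ i, MeasurableSet (C i) := fun i => measurableSet_toMeasurable μ (B i)
  have hCae : ∀ i, μ (C i ∆ B i) = 0 := fun i =>
    measure_symmDiff_eq_zero_iff.2 (hBnm i).toMeasurable_ae_eq
  obtain ⟨D, hDsup, hDmeas, hD0⟩ :=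
    exists_measurable_superset_of_null (measure_iUnion_null hCae : μ (⋃ i, C i ∆ B i) = 0)
  have hBC : ∀ x, x ∉ D → ∀ i, (x ∈ B i ↔ x ∈ C i) := by
    intro x hx i
    have : x ∉ C i ∆ B i := fun h => hx (hDsup (mem_iUnion.2 ⟨i, h⟩))
    rw [Set.mem_symmDiff] at this
    tauto
  -- the Borel signature map
  set A : Set X := Dᶜ ∩ (C 0)ᶜ with hAdef
  have hAmeas : MeasurableSet A := hDmeas.compl.inter (hCmeas 0).compl
  have hAB0 : ∀ x ∈ A, x ∉ B 0 := fun x hx h => hx.2 ((hBC x hx.1 0).1 h)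
  set g : X → ℕ → Bool := fun x n => (C n).boolIndicator x with hgdef
  have hgm : Measurable g := by
    refine measurable_pi_lambda _ fun n => ?_
    refine measurable_to_countable' fun b => ?_
    cases b
    · rw [Set.preimage_boolIndicator_false]
      exact (hCmeas n).compl
    · rw [Set.preimage_boolIndicator_true]
      exact hCmeas n
  have hbool : ∀ (s : Set X) (x y : X), (s.boolIndicator x = s.boolIndicator y) ↔
      (x ∈ s ↔ y ∈ s) := by
    intro s x y
    unfold Set.boolIndicator
    split_ifs with h1 h2 h2 <;> simp [h1, h2]
  have hkey2 : ∀ x y, x ∈ A → y ∈ A → g x = g y → y ∈ orb x := by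
    intro x y hx hy hgxy
    refine hkey x y (hAB0 x hx) (hAB0 y hy) fun i => ?_
    have := (hbool (C i) x y).1 (congrFun hgxy i)
    rw [hBC x hx.1 i, hBC y hy.1 i]
    exact this
  have hkey3 : ∀ x y, x ∈ A → y ∈ A → y ∈ orb x → g x = g y := by
    intro x y hx hy hyx
    funext i
    refine (hbool (C i) x y).2 ?_
    rw [← hBC x hx.1 i, ← hBC y hy.1 i]
    exact hBiff i x y hyx
  -- compact pieces on which g is continuous
  have hMa : ∀ k j : ℕ, ∃ M, IsCompact M ∧ M ⊆ A ∩ spanningSets μ k ∧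
      μ ((A ∩ spanningSets μ k) \ M) ≤ ((j : ℝ≥0∞) + 1)⁻¹ ∧ ContinuousOn g M := by
    intro k j
    have hPm : MeasurableSet (A ∩ spanningSets μ k) :=
      hAmeas.inter (measurableSet_spanningSets μ k)
    have hPfin : μ (A ∩ spanningSets μ k) ≠ ∞ :=
      (lt_of_le_of_lt (measure_mono inter_subset_right) (measure_spanningSets_lt_top μ k)).ne
    have hεne : ((j : ℝ≥0∞) + 1)⁻¹ ≠ 0 := by
      simp [ENNReal.inv_ne_zero]
    obtain ⟨M, h1, h2, h3, h4⟩ := compact_cont μ C hCmeas _ hPm hPfin hεne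
    exact ⟨M, h1, h2, h3, h4⟩
  choose Mf hMfc hMfsub hMfμ hMfcont using hMa
  obtain ⟨Sf, hSfsub⟩ :
      ∃ Sf : ℕ → ℕ → Set X, ∀ k j, MeasurableSet (Sf k j) ∧ Sf k j ⊆ Mf k j ∧
        ∀ x ∈ Mf k j, ∃! y, y ∈ Sf k j ∧ g y = g x := by
    have h := fun k j => FM_selection g hgm (Mf k j) (hMfc k j) (hMfcont k j)
    choose Sf h1 h2 h3 using fun k : ℕ => fun j : ℕ => h k j
    exact ⟨Sf, fun k j => ⟨h1 k j, h2 k j, h3 k j⟩⟩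
  set M' : ℕ → Set X := fun p => Mf (Nat.unpair p).1 (Nat.unpair p).2 with hM'def
  set S' : ℕ → Set X := fun p => Sf (Nat.unpair p).1 (Nat.unpair p).2 with hS'def
  set E : ℕ → Set (ℕ → Bool) := fun p => g '' (M' p) with hEdef
  have hM'A : ∀ p, M' p ⊆ A := fun p =>
    (hMfsub (Nat.unpair p).1 (Nat.unpair p).2).trans inter_subset_left
  have hS'M : ∀ p, S' p ⊆ M' p := fun p => (hSfsub (Nat.unpair p).1 (Nat.unpair p).2).2.1
  have hEmeas : ∀ p, MeasurableSet (E p) := by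
    intro p
    have hc : IsCompact (g '' (M' p)) :=
      (hMfc _ _).image_of_continuousOn (hMfcont _ _)
    exact hc.isClosed.measurableSet
  set U : Set X := ⋃ p, M' p with hUdef
  set Bsec : Set X := ⋃ p, (S' p \ g ⁻¹' (⋃ m, ⋃ (_ : m < p), E m)) with hBsecdef
  have hBsecMeas : MeasurableSet Bsec := by
    refine MeasurableSet.iUnion fun p => ((hSfsub _ _).1).diff (hgm ?_)
    exact MeasurableSet.iUnion fun m => MeasurableSet.iUnion fun _ => hEmeas m
  set N₀ : Set X := {x | ∀ y ∈ orb x, y ∉ U} with hN₀def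
  have hN₀inv : ∀ x ∈ N₀, orb x ⊆ N₀ := fun x hx z hz y hy => hx y (htrans x z y hz hy)
  have hAU : μ (A \ U) = 0 := by
    have hcover : A \ U ⊆ ⋃ k, ((A ∩ spanningSets μ k) \ U) := by
      intro x hx
      obtain ⟨k, hk⟩ : ∃ k, x ∈ spanningSets μ k := by
        have h := iUnion_spanningSets μ
        have : x ∈ ⋃ k, spanningSets μ k := by rw [h]; trivial
        exact mem_iUnion.1 this
      exact mem_iUnion.2 ⟨k, ⟨⟨hx.1, hk⟩, hx.2⟩⟩
    refine measure_mono_null hcover (measure_iUnion_null fun k => ?_)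
    by_contra hne
    obtain ⟨j, hj⟩ := ENNReal.exists_inv_nat_lt hne
    have hMU : Mf k j ⊆ U := by
      intro z hz
      refine mem_iUnion.2 ⟨Nat.pair k j, ?_⟩
      show z ∈ Mf (Nat.unpair (Nat.pair k j)).1 (Nat.unpair (Nat.pair k j)).2
      rw [Nat.unpair_pair]
      exact hz
    have hle : μ ((A ∩ spanningSets μ k) \ U) ≤ ((j : ℝ≥0∞) + 1)⁻¹ :=
      le_trans (measure_mono (diff_subset_diff_right hMU)) (hMfμ k j)
    have h2 : ((j : ℝ≥0∞) + 1)⁻¹ ≤ ((j : ℝ≥0∞))⁻¹ :=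
      ENNReal.inv_le_inv' (le_add_right le_rfl)
    exact absurd (hj.trans_le (hle.trans h2)) (lt_irrefl _)
  have hN₀null : μ N₀ = 0 := by
    have hsub : N₀ ⊆ B 0 ∪ (D ∪ (A \ U)) := by
      intro x hx
      by_cases h0 : x ∈ B 0
      · exact Or.inl h0
      by_cases hD : x ∈ D
      · exact Or.inr (Or.inl hD)
      have hxA : x ∈ A := ⟨hD, fun hC0 => h0 ((hBC x hD 0).2 hC0)⟩
      exact Or.inr (Or.inr ⟨hxA, hx x (hmem x)⟩)
    exact measure_mono_null hsub
      (measure_union_null hB0 (measure_union_null hD0 hAU))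
  refine ⟨Bsec, N₀, hBsecMeas, hN₀null, hN₀inv, ?_⟩
  intro x hxorb
  obtain ⟨z, hz, hzN⟩ := not_subset.1 hxorb
  have : ∃ y ∈ orb z, y ∈ U := by
    by_contra h
    push_neg at h
    exact hzN h
  obtain ⟨y, hyz, hyU⟩ := this
  have hyx : y ∈ orb x := htrans x z y hz hyz
  obtain ⟨p₀, hp₀⟩ := mem_iUnion.1 hyU
  have hyA : y ∈ A := hM'A p₀ hp₀
  have hEx : ∃ p, g y ∈ E p := ⟨p₀, mem_image_of_mem g hp₀⟩
  set p₁ := Nat.find hEx with hp₁def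
  have hp₁ : g y ∈ E p₁ := Nat.find_spec hEx
  have hp₁min : ∀ m, m < p₁ → g y ∉ E m := fun m hm => Nat.find_min hEx hm
  obtain ⟨w, hwM, hw⟩ := hp₁
  obtain ⟨s, ⟨hsS, hsg⟩, hsuniq⟩ := (hSfsub (Nat.unpair p₁).1 (Nat.unpair p₁).2).2.2 w hwM
  have hsS' : s ∈ S' p₁ := hsS
  have hsA : s ∈ A := hM'A p₁ (hS'M p₁ hsS')
  have hgsy : g s = g y := hsg.trans hw
  have hsorb : s ∈ orb x := htrans x y s hyx (hkey2 y s hyA hsA hgsy.symm)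
  have hsBsec : s ∈ Bsec := by
    refine mem_iUnion.2 ⟨p₁, hsS', fun hmem' => ?_⟩
    obtain ⟨m, hm⟩ := mem_iUnion.1 hmem'
    obtain ⟨hmlt, hgs⟩ := mem_iUnion.1 hm
    rw [hgsy] at hgs
    exact hp₁min m hmlt hgs
  refine ⟨s, ⟨hsBsec, hsorb⟩, ?_⟩
  rintro w' ⟨hw'B, hw'orb⟩
  obtain ⟨q, hq⟩ := mem_iUnion.1 hw'B
  have hw'S : w' ∈ S' q := hq.1
  have hw'A : w' ∈ A := hM'A q (hS'M q hw'S)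
  have hyw' : y ∈ orb w' := htrans w' x y (hsymm x w' hw'orb) hyx
  have hgw' : g w' = g y := hkey3 w' y hw'A hyA hyw'
  have hq1 : g y ∈ E q := ⟨w', hS'M q hw'S, hgw'⟩
  have hqge : p₁ ≤ q := Nat.find_min' hEx hq1
  have hqeq : q = p₁ := by
    rcases lt_or_eq_of_le hqge with h | h
    · exfalso
      refine hq.2 (mem_iUnion.2 ⟨p₁, mem_iUnion.2 ⟨h, ?_⟩⟩)
      rw [hgw']
      exact Nat.find_spec hEx
    · exact h.symm
  rw [hqeq] at hw'S
  exact hsuniq w' ⟨hw'S, hgw'.trans hw.symm⟩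

theorem stmt2
    {G : Type*} [Group G] [TopologicalSpace G] [IsTopologicalGroup G]
    [LocallyCompactSpace G] [SecondCountableTopology G] [T2Space G]
    (G₁ G₂ : Subgroup G) (hG₁ : IsClosed (G₁ : Set G)) (hG₂ : IsClosed (G₂ : Set G))
    {X : Type*} [TopologicalSpace X] [TopologicalSpace.MetrizableSpace X]
    [LocallyCompactSpace X] [SecondCountableTopology X]
    [MeasurableSpace X] [BorelSpace X]
    (π : G → X) (hπc : Continuous π) (hπo : IsOpenMap π) (hπs : Function.Surjective π)
    (act : X → G → X) (hactc : Continuous fun q : X × G => act q.1 q.2)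
    (hact1 : ∀ x : X, act x 1 = x)
    (hactm : ∀ (x : X) (g g' : G), act (act x g) g' = act x (g * g'))
    (hπact : ∀ g g' : G, π (g * g') = act (π g) g')
    (hπker : ∀ g g' : G, π g = π g' ↔ ∃ h ∈ G₁, g' = h * g)
    (μ : Measure X) [SigmaFinite μ] [μ.Regular] (hμ : μ ≠ 0)
    (hqi : ∀ g : G, μ.map (fun x => act x (g⁻¹)) ≪ μ ∧ μ ≪ μ.map (fun x => act x (g⁻¹)))
    (B : ℕ → Set X) (hBnm : ∀ i : ℕ, NullMeasurableSet (B i) μ)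
    (hBinv : ∀ i : ℕ, ∀ x ∈ B i, ∀ η ∈ G₂, act x η ∈ B i)
    (hB0 : μ (B 0) = 0)
    (hBsep : ∀ x : X, ¬ ({y : X | ∃ η ∈ G₂, act x η = y} ⊆ B 0) →
      {y : X | ∃ η ∈ G₂, act x η = y} =
        ⋂ i ∈ {i : ℕ | 1 ≤ i ∧ {y : X | ∃ η ∈ G₂, act x η = y} ⊆ B i}, B i)
    :
    ∃ Bsec N₀ : Set X,
      MeasurableSet Bsec ∧ μ N₀ = 0 ∧
      (∀ x ∈ N₀, ∀ η ∈ G₂, act x η ∈ N₀) ∧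
      ∀ x : X, ¬ ({y : X | ∃ η ∈ G₂, act x η = y} ⊆ N₀) →
        ∃! y : X, y ∈ Bsec ∩ {y : X | ∃ η ∈ G₂, act x η = y} := by
  have hmem : ∀ x : X, x ∈ {y : X | ∃ η ∈ G₂, act x η = y} :=
    fun x => ⟨1, one_mem _, hact1 x⟩
  have hsymm : ∀ x y : X, y ∈ {z : X | ∃ η ∈ G₂, act x η = z} →
      x ∈ {z : X | ∃ η ∈ G₂, act y η = z} := by
    rintro x y ⟨η, hη, rfl⟩
    refine ⟨η⁻¹, inv_mem hη, ?_⟩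
    rw [hactm, mul_inv_cancel, hact1]
  have htrans : ∀ x y z : X, y ∈ {w : X | ∃ η ∈ G₂, act x η = w} →
      z ∈ {w : X | ∃ η ∈ G₂, act y η = w} → z ∈ {w : X | ∃ η ∈ G₂, act x η = w} := by
    rintro x y z ⟨η, hη, rfl⟩ ⟨θ, hθ, rfl⟩
    exact ⟨η * θ, mul_mem hη hθ, (hactm x η θ).symm⟩
  obtain ⟨Bsec, N₀, h1, h2, h3, h4⟩ :=
    main_aux μ (fun x => {y : X | ∃ η ∈ G₂, act x η = y}) hmem hsymm htrans B hBnm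
      (fun i x hx => by
        rintro y ⟨η, hη, rfl⟩
        exact hBinv i x hx η hη)
      hB0 hBsep
  exact ⟨Bsec, N₀, h1, h2, fun x hx η hη => h3 x hx ⟨η, hη, rfl⟩, h4⟩
end

section
/- For every compact subset K of X, the image π_X(K) of K under the orbit map is a measurable subset of Q. -/
open MeasureTheory Set
open scoped ENNReal Pointwise

theorem stmt4
    {G : Type*} [Group G] [TopologicalSpace G] [IsTopologicalGroup G]
    [LocallyCompactSpace G] [SecondCountableTopology G] [T2Space G]
    (G₁ G₂ : Subgroup G) (hG₁ : IsClosed (G₁ : Set G)) (hG₂ : IsClosed (G₂ : Set G))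
    {X : Type*} [TopologicalSpace X] [TopologicalSpace.MetrizableSpace X]
    [LocallyCompactSpace X] [SecondCountableTopology X]
    [MeasurableSpace X] [BorelSpace X]
    (π : G → X) (hπc : Continuous π) (hπo : IsOpenMap π) (hπs : Function.Surjective π)
    (act : X → G → X) (hactc : Continuous fun q : X × G => act q.1 q.2)
    (hact1 : ∀ x : X, act x 1 = x)
    (hactm : ∀ (x : X) (g g' : G), act (act x g) g' = act x (g * g'))
    (hπact : ∀ g g' : G, π (g * g') = act (π g) g')
    (hπker : ∀ g g' : G, π g = π g' ↔ ∃ h ∈ G₁, g' = h * g)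
    (μ : Measure X) [SigmaFinite μ] [μ.Regular] (hμ : μ ≠ 0)
    (hqi : ∀ g : G, μ.map (fun x => act x (g⁻¹)) ≪ μ ∧ μ ≪ μ.map (fun x => act x (g⁻¹)))
    {Q : Type*} [MeasurableSpace Q]
    (p : X → Q) (hps : Function.Surjective p)
    (hporb : ∀ x y : X, p x = p y ↔ ∃ η ∈ G₂, act x η = y)
    (hQσ : ∀ E : Set Q, MeasurableSet E ↔ MeasurableSet (p ⁻¹' E))
    (μ' : Measure X) [IsFiniteMeasure μ'] (hμ'₁ : μ' ≪ μ) (hμ'₂ : μ ≪ μ')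
    (ν : Measure Q) (hν : ν = μ'.map p)
    (B : ℕ → Set X) (hBnm : ∀ i : ℕ, NullMeasurableSet (B i) μ)
    (hBinv : ∀ i : ℕ, ∀ x ∈ B i, ∀ η ∈ G₂, act x η ∈ B i)
    (hB0 : μ (B 0) = 0)
    (hBsep : ∀ x : X, ¬ ({y : X | ∃ η ∈ G₂, act x η = y} ⊆ B 0) →
      {y : X | ∃ η ∈ G₂, act x η = y} =
        ⋂ i ∈ {i : ℕ | 1 ≤ i ∧ {y : X | ∃ η ∈ G₂, act x η = y} ⊆ B i}, B i)
    :
    ∀ K : Set X, IsCompact K → MeasurableSet (p '' K) := by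
  intro K hK
  rw [hQσ]
  have hsat : p ⁻¹' (p '' K) =
      (fun q : X × G => act q.1 q.2) '' (K ×ˢ (G₂ : Set G)) := by
    ext x
    simp only [Set.mem_preimage, Set.mem_image, Set.mem_prod, Prod.exists]
    constructor
    · rintro ⟨k, hk, hpk⟩
      obtain ⟨η, hη, hact⟩ := (hporb k x).mp hpk
      exact ⟨k, η, ⟨hk, hη⟩, hact⟩
    · rintro ⟨k, η, ⟨hk, hη⟩, hact⟩
      exact ⟨k, hk, (hporb k x).mpr ⟨η, hη, hact⟩⟩
  rw [hsat]
  have hcover : (G₂ : Set G) = ⋃ n, (G₂ : Set G) ∩ compactCovering G n := by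
    rw [← Set.inter_iUnion, iUnion_compactCovering, Set.inter_univ]
  rw [hcover, Set.prod_iUnion, Set.image_iUnion]
  refine MeasurableSet.iUnion fun n => ?_
  have hc : IsCompact ((fun q : X × G => act q.1 q.2) ''
      (K ×ˢ ((G₂ : Set G) ∩ compactCovering G n))) :=
    (hK.prod ((isCompact_compactCovering G n).inter_left hG₂)).image hactc
  exact hc.isClosed.measurableSet
end

section
/- For every continuous compactly supported function f : G → H_L, with support K, there is a unique function f⁰ : G → H_L such that ∫_{G₁} ⟨J_L L_{h⁻¹} f(hx), v⟩ dμ_{G₁}(h) = ⟨J_L f⁰(x), v⟩ for all x ∈ G and all v ∈ H_L; equivalently f⁰(x) = ∫_{G₁} L_{h⁻¹}(f(hx)) dμ_{G₁}(h) as a Bochner integral, the integrand being a norm-continuous compactly supported function of h. The function f⁰ is norm-continuous, satisfies f⁰(hx) = L_h(f⁰(x)) for all h ∈ G₁ and x ∈ G, and vanishes outside the set G₁K. -/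
open MeasureTheory Set
open scoped ENNReal Pointwise Topology

/-- A strongly continuous, locally (on compacts) bounded family of operators applied to a
continuous function is continuous. -/
lemma strong_cont_apply_cont {X : Type*} [TopologicalSpace X] [LocallyCompactSpace X]
    {H : Type*} [NormedAddCommGroup H] [NormedSpace ℂ H]
    (T : X → H →L[ℂ] H)
    (hTc : ∀ v : H, Continuous fun x => T x v)
    (hTb : ∀ K : Set X, IsCompact K → ∃ M : ℝ, ∀ x ∈ K, ‖T x‖ ≤ M)
    {g : X → H} (hg : Continuous g) :
    Continuous fun x => T x (g x) := by
  rw [continuous_iff_continuousAt]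
  intro x₀
  obtain ⟨K, hKc, hKn⟩ := exists_compact_mem_nhds x₀
  obtain ⟨M, hM⟩ := hTb K hKc
  rw [ContinuousAt, tendsto_iff_norm_sub_tendsto_zero]
  have hbound : ∀ᶠ x in 𝓝 x₀, ‖T x (g x) - T x₀ (g x₀)‖ ≤
      M * ‖g x - g x₀‖ + ‖T x (g x₀) - T x₀ (g x₀)‖ := by
    filter_upwards [hKn] with x hx
    calc ‖T x (g x) - T x₀ (g x₀)‖
        = ‖T x (g x - g x₀) + (T x (g x₀) - T x₀ (g x₀))‖ := by
          rw [map_sub]; congr 1; abel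
      _ ≤ ‖T x (g x - g x₀)‖ + ‖T x (g x₀) - T x₀ (g x₀)‖ := norm_add_le _ _
      _ ≤ M * ‖g x - g x₀‖ + ‖T x (g x₀) - T x₀ (g x₀)‖ := by
          gcongr
          exact ((T x).le_opNorm _).trans
            (mul_le_mul_of_nonneg_right (hM x hx) (norm_nonneg _))
  have h1 : Filter.Tendsto (fun x => ‖g x - g x₀‖) (𝓝 x₀) (𝓝 0) :=
    tendsto_iff_norm_sub_tendsto_zero.mp (hg.tendsto x₀)
  have h2 : Filter.Tendsto (fun x => ‖T x (g x₀) - T x₀ (g x₀)‖) (𝓝 x₀) (𝓝 0) :=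
    tendsto_iff_norm_sub_tendsto_zero.mp ((hTc (g x₀)).tendsto x₀)
  have h3 : Filter.Tendsto
      (fun x => M * ‖g x - g x₀‖ + ‖T x (g x₀) - T x₀ (g x₀)‖) (𝓝 x₀) (𝓝 0) := by
    have := (h1.const_mul M).add h2
    simpa using this
  exact squeeze_zero' (Filter.Eventually.of_forall fun x => norm_nonneg _) hbound h3

theorem stmt10
    {G : Type*} [Group G] [TopologicalSpace G] [IsTopologicalGroup G]
    [LocallyCompactSpace G] [SecondCountableTopology G] [T2Space G]
    [MeasurableSpace G] [BorelSpace G]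
    (G₁ : Subgroup G) (hG₁ : IsClosed (G₁ : Set G))
    (μ₁ : Measure ↥G₁) [SigmaFinite μ₁] [μ₁.IsMulRightInvariant]
    [IsFiniteMeasureOnCompacts μ₁] [μ₁.IsOpenPosMeasure]
    {H : Type*} [NormedAddCommGroup H] [InnerProductSpace ℂ H] [CompleteSpace H]
    [SecondCountableTopology H]
    (J : H →L[ℂ] H)
    (hJsa : ∀ v w : H, (inner ℂ (J v) w : ℂ) = inner ℂ v (J w))
    (hJ2 : ∀ v : H, J (J v) = v)
    (L : ↥G₁ → H →L[ℂ] H)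
    (hL1 : L 1 = ContinuousLinearMap.id ℂ H)
    (hLmul : ∀ a b : ↥G₁, L (a * b) = (L a).comp (L b))
    (hLcont : ∀ v : H, Continuous fun h : ↥G₁ => L h v)
    (hLbdd : ∀ K' : Set ↥G₁, IsCompact K' → ∃ M : ℝ, ∀ h ∈ K', ‖L h‖ ≤ M)
    (hLKrein : ∀ (h : ↥G₁) (v w : H), (inner ℂ (J (L h v)) (L h w) : ℂ) = inner ℂ (J v) w)
    (f : G → H) (hf : Continuous f) (hfc : HasCompactSupport f) :
    ∃ f0 : G → H,
      (∀ (x : G) (v : H),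
        ∫ h : ↥G₁, (inner ℂ (J (L (h⁻¹) (f ((h : G) * x)))) v : ℂ) ∂μ₁
          = inner ℂ (J (f0 x)) v) ∧
      (∀ g : G → H,
        (∀ (x : G) (v : H),
          ∫ h : ↥G₁, (inner ℂ (J (L (h⁻¹) (f ((h : G) * x)))) v : ℂ) ∂μ₁
            = inner ℂ (J (g x)) v) → g = f0) ∧
      (∀ x : G, Continuous fun h : ↥G₁ => L (h⁻¹) (f ((h : G) * x))) ∧
      (∀ x : G, HasCompactSupport fun h : ↥G₁ => L (h⁻¹) (f ((h : G) * x))) ∧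
      (∀ x : G, f0 x = ∫ h : ↥G₁, L (h⁻¹) (f ((h : G) * x)) ∂μ₁) ∧
      Continuous f0 ∧
      (∀ (h : ↥G₁) (x : G), f0 ((h : G) * x) = L h (f0 x)) ∧
      (∀ x : G, x ∉ (G₁ : Set G) * tsupport f → f0 x = 0) := by
  haveI : SecondCountableTopology ↥G₁ := Topology.IsEmbedding.subtypeVal.secondCountableTopology
  haveI : BorelSpace ↥G₁ := Subtype.borelSpace _
  haveI : LocallyCompactSpace ↥G₁ := hG₁.isClosedEmbedding_subtypeVal.locallyCompactSpace
  set F : G → ↥G₁ → H := fun x h => L h⁻¹ (f ((h : G) * x)) with hF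
  -- continuity of the integrand
  have hcont : ∀ x : G, Continuous (F x) := by
    intro x
    refine strong_cont_apply_cont (fun h => L h⁻¹) ?_ ?_
      (hf.comp ((continuous_subtype_val).mul continuous_const))
    · exact fun v => (hLcont v).comp continuous_inv
    · intro K hK
      obtain ⟨M, hM⟩ := hLbdd K⁻¹ hK.inv
      exact ⟨M, fun h hh => hM h⁻¹ (Set.inv_mem_inv.mpr hh)⟩
  -- compact support of the integrand
  have hsupp : ∀ x : G, HasCompactSupport (F x) := by
    intro x
    have hKc : IsCompact ((fun h : ↥G₁ => (h : G)) ⁻¹' (tsupport f * {x⁻¹})) :=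
      hG₁.isClosedEmbedding_subtypeVal.isCompact_preimage
        (hfc.mul isCompact_singleton)
    refine HasCompactSupport.intro hKc ?_
    intro h hh
    have hfz : f ((h : G) * x) = 0 := by
      by_contra hne
      apply hh
      have hmem : (h : G) * x ∈ tsupport f := subset_tsupport f hne
      refine ⟨(h : G) * x, hmem, x⁻¹, rfl, by group⟩
    simp [hF, hfz]
  have hint : ∀ x : G, Integrable (F x) μ₁ :=
    fun x => (hcont x).integrable_of_hasCompactSupport (hsupp x)
  set f0 : G → H := fun x => ∫ h, F x h ∂μ₁ with hf0
  -- the defining inner-product identity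
  have hid : ∀ (x : G) (v : H),
      ∫ h : ↥G₁, (inner ℂ (J (F x h)) v : ℂ) ∂μ₁ = inner ℂ (J (f0 x)) v := by
    intro x v
    have key : ∫ h : ↥G₁, (inner ℂ v (J (F x h)) : ℂ) ∂μ₁ = inner ℂ v (J (f0 x)) := by
      have := ContinuousLinearMap.integral_comp_comm
        (((innerSL ℂ v).comp J)) (hint x)
      simpa using this
    have conj_eq : ∀ h : ↥G₁, (inner ℂ (J (F x h)) v : ℂ)
        = (starRingEnd ℂ) (inner ℂ v (J (F x h)) : ℂ) :=
      fun h => (inner_conj_symm _ _).symm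
    simp_rw [conj_eq]
    rw [integral_conj, key, inner_conj_symm]
  refine ⟨f0, hid, ?_, hcont, hsupp, fun _ => rfl, ?_, ?_, ?_⟩
  · -- uniqueness
    intro g hg
    funext x
    have hJeq : J (g x) = J (f0 x) :=
      ext_inner_right ℂ fun v => ((hg x v).symm.trans (hid x v))
    have := congrArg J hJeq
    rwa [hJ2, hJ2] at this
  · -- continuity of f0
    rw [continuous_iff_continuousAt]
    intro x₀
    obtain ⟨V, hVc, hVn⟩ := exists_compact_mem_nhds x₀
    set C : Set ↥G₁ := (fun h : ↥G₁ => (h : G)) ⁻¹' (tsupport f * V⁻¹) with hC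
    have hCc : IsCompact C :=
      hG₁.isClosedEmbedding_subtypeVal.isCompact_preimage (hfc.mul hVc.inv)
    obtain ⟨M, hM⟩ := hLbdd C⁻¹ hCc.inv
    obtain ⟨B, hB⟩ := hfc.exists_bound_of_continuous hf
    set M' : ℝ := max M 0 with hM'def
    set B' : ℝ := max B 0 with hB'def
    have hM' : ∀ h ∈ C, ‖L h⁻¹‖ ≤ M' :=
      fun h hh => (hM h⁻¹ (Set.inv_mem_inv.mpr hh)).trans (le_max_left _ _)
    have hCm : MeasurableSet C := hCc.isClosed.measurableSet
    have hbi : Integrable (C.indicator fun _ => M' * B') μ₁ := by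
      rw [integrable_indicator_iff hCm]
      exact integrableOn_const hCc.measure_lt_top.ne
    rw [hf0]
    refine continuousAt_of_dominated ?_ ?_ hbi ?_
    · exact Filter.Eventually.of_forall fun x => (hcont x).aestronglyMeasurable
    · filter_upwards [hVn] with x hxV
      refine ae_of_all _ fun h => ?_
      by_cases hh : h ∈ C
      · rw [Set.indicator_of_mem hh]
        calc ‖F x h‖ ≤ ‖L h⁻¹‖ * ‖f ((h : G) * x)‖ := (L h⁻¹).le_opNorm _
          _ ≤ M' * B' := mul_le_mul (hM' h hh) ((hB _).trans (le_max_left _ _))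
              (norm_nonneg _) (le_max_right _ _)
      · rw [Set.indicator_of_notMem hh]
        have hfz : f ((h : G) * x) = 0 := by
          by_contra hne
          apply hh
          have hm : ((h : G) * x) * x⁻¹ ∈ tsupport f * V⁻¹ :=
            Set.mul_mem_mul (subset_tsupport f hne) (Set.inv_mem_inv.mpr hxV)
          simpa [hC] using hm
        simp [hF, hfz]
    · refine ae_of_all _ fun h => ?_
      exact ((L h⁻¹).continuous.comp (hf.comp (continuous_mul_left ((h : G))))).continuousAt
  · -- equivariance
    intro h₀ x
    have step1 : L h₀ (f0 x) = ∫ h, L h₀ (F x h) ∂μ₁ :=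
      (ContinuousLinearMap.integral_comp_comm (L h₀) (hint x)).symm
    have step2 : ∀ h : ↥G₁, L h₀ (F x h) = F ((h₀ : G) * x) (h * h₀⁻¹) := by
      intro h
      simp only [hF]
      have : L h₀ (L h⁻¹ (f ((h : G) * x))) = L (h₀ * h⁻¹) (f ((h : G) * x)) := by
        rw [hLmul]; rfl
      rw [this]
      congr 1
      · congr 1; group
      · congr 1
        push_cast
        group
    have step3 : ∫ h, F ((h₀ : G) * x) (h * h₀⁻¹) ∂μ₁
        = ∫ h, F ((h₀ : G) * x) h ∂μ₁ :=
      integral_mul_right_eq_self (F ((h₀ : G) * x)) h₀⁻¹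
    calc f0 ((h₀ : G) * x) = ∫ h, F ((h₀ : G) * x) h ∂μ₁ := rfl
      _ = ∫ h, F ((h₀ : G) * x) (h * h₀⁻¹) ∂μ₁ := step3.symm
      _ = ∫ h, L h₀ (F x h) ∂μ₁ := by simp_rw [step2]
      _ = L h₀ (f0 x) := step1.symm
  · -- vanishing outside G₁ * tsupport f
    intro x hx
    have hz : F x = 0 := by
      funext h
      have hfz : f ((h : G) * x) = 0 := by
        by_contra hne
        refine hx ⟨((h⁻¹ : ↥G₁) : G), (h⁻¹ : ↥G₁).2, (h : G) * x, subset_tsupport f hne, ?_⟩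
        push_cast
        group
      simp [hF, hfz]
    simp [hf0, hz]
end

section
/- For each fixed x ∈ G, the set of vectors f⁰(x) := ∫_{G₁} L_{h⁻¹}(f(hx)) dμ_{G₁}(h), as f ranges over all continuous compactly supported functions from G to H_L, is a dense linear subspace of H_L. -/
open MeasureTheory Set
open scoped ENNReal Pointwise

theorem stmt11
    {G : Type*} [Group G] [TopologicalSpace G] [IsTopologicalGroup G]
    [LocallyCompactSpace G] [SecondCountableTopology G] [T2Space G]
    [MeasurableSpace G] [BorelSpace G]
    (G₁ : Subgroup G) (hG₁ : IsClosed (G₁ : Set G))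
    (μ₁ : Measure ↥G₁) [SigmaFinite μ₁] [μ₁.IsMulRightInvariant]
    [IsFiniteMeasureOnCompacts μ₁] [μ₁.IsOpenPosMeasure]
    {H : Type*} [NormedAddCommGroup H] [InnerProductSpace ℂ H] [CompleteSpace H]
    [SecondCountableTopology H]
    (J : H →L[ℂ] H)
    (hJsa : ∀ v w : H, (inner ℂ (J v) w : ℂ) = inner ℂ v (J w))
    (hJ2 : ∀ v : H, J (J v) = v)
    (L : ↥G₁ → H →L[ℂ] H)
    (hL1 : L 1 = ContinuousLinearMap.id ℂ H)
    (hLmul : ∀ a b : ↥G₁, L (a * b) = (L a).comp (L b))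
    (hLcont : ∀ v : H, Continuous fun h : ↥G₁ => L h v)
    (hLbdd : ∀ K' : Set ↥G₁, IsCompact K' → ∃ M : ℝ, ∀ h ∈ K', ‖L h‖ ≤ M)
    (hLKrein : ∀ (h : ↥G₁) (v w : H), (inner ℂ (J (L h v)) (L h w) : ℂ) = inner ℂ (J v) w)
    :
    ∀ x : G,
      ∃ S : Submodule ℂ H,
        (S : Set H) =
          {v : H | ∃ f : G → H, Continuous f ∧ HasCompactSupport f ∧
            v = ∫ h : ↥G₁, L (h⁻¹) (f ((h : G) * x)) ∂μ₁} ∧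
        Dense (S : Set H) := by
  intro x
  have hval : Topology.IsClosedEmbedding ((↑) : ↥G₁ → G) :=
    hG₁.isClosedEmbedding_subtypeVal
  have hemb : Topology.IsClosedEmbedding (fun h : ↥G₁ => (h : G) * x) :=
    (Homeomorph.mulRight x).isClosedEmbedding.comp hval
  have hloc : LocallyCompactSpace ↥G₁ := hval.locallyCompactSpace
  haveI : BorelSpace {y : G // y ∈ G₁} := Subtype.borelSpace (G₁ : Set G)
  haveI : OpensMeasurableSpace {y : G // y ∈ G₁} := Subtype.opensMeasurableSpace (G₁ : Set G)
  -- Continuity of the integrand, for any continuous f : G → H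
  have hcont : ∀ f : G → H, Continuous f →
      Continuous fun h : ↥G₁ => L h⁻¹ (f ((h : G) * x)) := by
    intro f hf
    rw [continuous_iff_continuousAt]
    intro h₀
    obtain ⟨K, hKc, hKmem⟩ := exists_compact_mem_nhds h₀
    obtain ⟨M, hM⟩ := hLbdd K⁻¹ hKc.inv
    have hM0 : 0 ≤ M := le_trans (norm_nonneg _) (hM h₀⁻¹ (by simpa using mem_of_mem_nhds hKmem))
    have hfx : Continuous fun h : ↥G₁ => f ((h : G) * x) := hf.comp hemb.continuous
    have h2 : Filter.Tendsto (fun h : ↥G₁ => L h⁻¹ (f ((h₀ : G) * x))) (nhds h₀)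
        (nhds (L h₀⁻¹ (f ((h₀ : G) * x)))) :=
      (((hLcont (f ((h₀ : G) * x))).comp continuous_inv).tendsto h₀)
    have h1 : Filter.Tendsto
        (fun h : ↥G₁ => L h⁻¹ (f ((h : G) * x) - f ((h₀ : G) * x))) (nhds h₀)
        (nhds 0) := by
      apply squeeze_zero_norm' (a := fun h : ↥G₁ => M * ‖f ((h : G) * x) - f ((h₀ : G) * x)‖)
      · filter_upwards [hKmem] with h hh
        calc ‖L h⁻¹ (f ((h : G) * x) - f ((h₀ : G) * x))‖
            ≤ ‖L h⁻¹‖ * ‖f ((h : G) * x) - f ((h₀ : G) * x)‖ := (L h⁻¹).le_opNorm _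
          _ ≤ M * ‖f ((h : G) * x) - f ((h₀ : G) * x)‖ := by
              apply mul_le_mul_of_nonneg_right (hM _ (by simpa using hh)) (norm_nonneg _)
      · have : Filter.Tendsto (fun h : ↥G₁ => f ((h : G) * x) - f ((h₀ : G) * x)) (nhds h₀)
            (nhds 0) := by
          have h3 : Filter.Tendsto (fun h : ↥G₁ => f ((h : G) * x) - f ((h₀ : G) * x)) (nhds h₀)
              (nhds (f ((h₀ : G) * x) - f ((h₀ : G) * x))) :=
            (hfx.tendsto h₀).sub tendsto_const_nhds
          rwa [sub_self] at h3
        have := (this.norm).const_mul M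
        simpa using this
    have := h1.add h2
    rw [zero_add] at this
    apply this.congr
    intro h
    rw [← map_add]
    congr 1
    abel
  -- Integrability of the integrand
  have hint : ∀ f : G → H, Continuous f → HasCompactSupport f →
      Integrable (fun h : ↥G₁ => L h⁻¹ (f ((h : G) * x))) μ₁ := by
    intro f hf hfc
    apply Continuous.integrable_of_hasCompactSupport (hcont f hf)
    apply HasCompactSupport.mono (hfc.comp_isClosedEmbedding hemb)
    intro h hh
    simp only [Function.mem_support, Function.comp] at hh ⊢
    intro h0
    apply hh
    rw [h0, map_zero]
  set T : Set H := {v : H | ∃ f : G → H, Continuous f ∧ HasCompactSupport f ∧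
      v = ∫ h : ↥G₁, L (h⁻¹) (f ((h : G) * x)) ∂μ₁} with hT
  -- T is a submodule
  have hzero : (0 : H) ∈ T := by
    refine ⟨fun _ => 0, continuous_const, ?_, by simp⟩
    simpa [HasCompactSupport, tsupport, Function.support] using isCompact_empty
  have hadd : ∀ v w : H, v ∈ T → w ∈ T → v + w ∈ T := by
    rintro v w ⟨f, hf, hfc, rfl⟩ ⟨g, hg, hgc, rfl⟩
    refine ⟨f + g, hf.add hg, hfc.add hgc, ?_⟩
    rw [← integral_add (hint f hf hfc) (hint g hg hgc)]
    congr 1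
    ext h
    simp [map_add]
  have hsmul : ∀ (c : ℂ) (v : H), v ∈ T → c • v ∈ T := by
    rintro c v ⟨f, hf, hfc, rfl⟩
    refine ⟨c • f, hf.const_smul c, hfc.smul_left, ?_⟩
    rw [← integral_smul]
    congr 1
    ext h
    simp
  refine ⟨{ carrier := T, add_mem' := fun {a b} ha hb => hadd a b ha hb,
            zero_mem' := hzero, smul_mem' := fun c a ha => hsmul c a ha }, rfl, ?_⟩
  -- Density
  have happrox : ∀ (v : H) (ε : ℝ), 0 < ε → ∃ w ∈ T, ‖v - w‖ ≤ ε := by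
    intro v ε hε
    have hLv : Continuous fun h : ↥G₁ => L h⁻¹ v := (hLcont v).comp continuous_inv
    have hE : IsOpen {h : ↥G₁ | ‖L h⁻¹ v - v‖ < ε} :=
      isOpen_lt ((hLv.sub continuous_const).norm) continuous_const
    obtain ⟨U, hU, hUE⟩ := hval.isInducing.isOpen_iff.mp hE
    have h1U : (1 : G) ∈ U := by
      have : (1 : ↥G₁) ∈ {h : ↥G₁ | ‖L h⁻¹ v - v‖ < ε} := by
        simp [hL1, hε]
      rw [← hUE] at this
      simpa using this
    obtain ⟨ψ, hψ1, hψ0, hψc, hψ01⟩ :=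
      exists_continuous_one_zero_of_isCompact (isCompact_singleton (x := (1 : G)))
        hU.isClosed_compl (by simpa [disjoint_compl_right_iff_subset] using h1U)
    have hψsupp : Function.support ψ ⊆ U := by
      intro g hg
      by_contra hgU
      exact hg (hψ0 hgU)
    set φ : ↥G₁ → ℝ := fun h => ψ (h : G) with hφ
    have hφcont : Continuous φ := ψ.continuous.comp continuous_subtype_val
    have hφc : HasCompactSupport φ := hψc.comp_isClosedEmbedding hval
    have hφint : Integrable φ μ₁ := hφcont.integrable_of_hasCompactSupport hφc
    have hφnn : ∀ h, 0 ≤ φ h := fun h => (hψ01 _).1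
    set c : ℝ := ∫ h : ↥G₁, φ h ∂μ₁ with hc
    have hcpos : 0 < c := by
      rw [hc, integral_pos_iff_support_of_nonneg hφnn hφint]
      apply (hφcont.isOpen_support).measure_pos μ₁
      exact ⟨1, by simp [hφ, hψ1 (mem_singleton _)]⟩
    set f : G → H := fun g => (c⁻¹ * ψ (g * x⁻¹)) • v with hf
    have hfcont : Continuous f :=
      (continuous_const.mul (ψ.continuous.comp (continuous_mul_right x⁻¹))).smul
        continuous_const
    have hfc : HasCompactSupport f := by
      apply HasCompactSupport.mono (hψc.comp_homeomorph (Homeomorph.mulRight x⁻¹))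
      intro g hg
      simp only [Function.mem_support, hf] at hg ⊢
      intro h0
      apply hg
      have h0' : ψ (g * x⁻¹) = 0 := h0
      rw [h0', mul_zero, zero_smul]
    refine ⟨_, ⟨f, hfcont, hfc, rfl⟩, ?_⟩
    have harg : ∀ h : ↥G₁, f ((h : G) * x) = (c⁻¹ * φ h) • v := by
      intro h
      simp [hf, hφ, mul_inv_cancel_right]
    have hw : (∫ h : ↥G₁, L (h⁻¹) (f ((h : G) * x)) ∂μ₁)
        = ∫ h : ↥G₁, (c⁻¹ * φ h) • (L h⁻¹ v) ∂μ₁ := by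
      congr 1
      ext h
      rw [harg h, (L h⁻¹).map_smul_of_tower]
    have hv : v = ∫ h : ↥G₁, (c⁻¹ * φ h) • v ∂μ₁ := by
      rw [integral_smul_const, hc, integral_const_mul, ← hc, inv_mul_cancel₀ (ne_of_gt hcpos),
        one_smul]
    have hint1 : Integrable (fun h : ↥G₁ => (c⁻¹ * φ h) • v) μ₁ :=
      ((hφint.const_mul c⁻¹).smul_const v)
    have hint2 : Integrable (fun h : ↥G₁ => (c⁻¹ * φ h) • (L h⁻¹ v)) μ₁ := by
      apply Continuous.integrable_of_hasCompactSupport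
        ((continuous_const.mul hφcont).smul hLv)
      apply HasCompactSupport.mono hφc
      intro h hh
      simp only [Function.mem_support] at hh ⊢
      intro h0
      apply hh
      show (c⁻¹ * φ h) • (L h⁻¹ v) = 0
      rw [h0, mul_zero, zero_smul]
    rw [hw]
    calc ‖v - ∫ h : ↥G₁, (c⁻¹ * φ h) • (L h⁻¹ v) ∂μ₁‖
        = ‖∫ h : ↥G₁, (c⁻¹ * φ h) • (v - L h⁻¹ v) ∂μ₁‖ := by
          rw [show (∫ h : ↥G₁, (c⁻¹ * φ h) • (v - L h⁻¹ v) ∂μ₁)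
              = (∫ h : ↥G₁, (c⁻¹ * φ h) • v ∂μ₁)
                - ∫ h : ↥G₁, (c⁻¹ * φ h) • (L h⁻¹ v) ∂μ₁ by
            rw [← integral_sub hint1 hint2]
            congr 1
            ext h
            rw [smul_sub]]
          rw [← hv]
      _ ≤ ∫ h : ↥G₁, ‖(c⁻¹ * φ h) • (v - L h⁻¹ v)‖ ∂μ₁ := norm_integral_le_integral_norm _
      _ ≤ ∫ h : ↥G₁, (c⁻¹ * φ h) * ε ∂μ₁ := by
          have hint3 : Integrable (fun h : ↥G₁ => (c⁻¹ * φ h) • (v - L h⁻¹ v)) μ₁ := by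
            exact (hint1.sub hint2).congr (ae_of_all _ fun h => by simp [smul_sub])
          apply integral_mono hint3.norm ((hφint.const_mul c⁻¹).mul_const ε)
          intro h
          show ‖(c⁻¹ * φ h) • (v - L h⁻¹ v)‖ ≤ (c⁻¹ * φ h) * ε
          have hnn : 0 ≤ c⁻¹ * φ h := mul_nonneg (inv_nonneg.2 hcpos.le) (hφnn h)
          rw [norm_smul, Real.norm_eq_abs, abs_of_nonneg hnn]
          by_cases h0 : φ h = 0
          · simp [h0]
          · apply mul_le_mul_of_nonneg_left _ hnn
            have : (h : G) ∈ U := hψsupp h0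
            have : h ∈ {h : ↥G₁ | ‖L h⁻¹ v - v‖ < ε} := by rw [← hUE]; exact this
            rw [norm_sub_rev]
            exact le_of_lt this
      _ = ε := by
          rw [show (fun h : ↥G₁ => (c⁻¹ * φ h) * ε) = fun h : ↥G₁ => c⁻¹ * ε * φ h by
              ext h; ring, integral_const_mul, ← hc]
          field_simp
  rw [Metric.dense_iff]
  intro v r hr
  obtain ⟨w, hwT, hw⟩ := happrox v (r / 2) (by linarith)
  refine ⟨w, ?_, hwT⟩
  rw [Metric.mem_ball, dist_eq_norm, norm_sub_rev]
  linarith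
end

section
/- The map t ↦ π(x_c t) from G₂ to X induces a well-defined, injective, continuous, G₂-equivariant map ψ of the coset space G₂/G_{x_c} into X whose image is exactly the G₂-orbit C of π(x_c); moreover ψ is a Borel isomorphism onto C: the image under ψ of every Borel subset of G₂/G_{x_c} is a Borel subset of X (in particular C itself is Borel in X), and the inverse map ψ⁻¹ : C → G₂/G_{x_c} is Borel measurable. Equivariance means that if [t] ∈ G₂/G_{x_c} and [z] = ψ([t]) ∈ C, then for every η ∈ G₂ also ψ([tη]) = [zη]. -/
open MeasureTheory Set
open scoped ENNReal Pointwise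

theorem aux_isOpen_of_dense_lc {Z : Type*} [TopologicalSpace Z] [T2Space Z]
    {s : Set Z} (hd : Dense s) (hlc : LocallyCompactSpace s) : IsOpen s := by
  rw [isOpen_iff_mem_nhds]
  intro x hx
  obtain ⟨K, hKn, -, hKc⟩ :=
    local_compact_nhds (x := (⟨x, hx⟩ : s)) (n := Set.univ) Filter.univ_mem
  rw [nhds_subtype, Filter.mem_comap] at hKn
  obtain ⟨U, hU, hUK⟩ := hKn
  obtain ⟨V, hVU, hV, hxV⟩ := mem_nhds_iff.mp hU
  have hKc' : IsCompact ((↑) '' K : Set Z) := hKc.image continuous_subtype_val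
  have hVs : V ⊆ s := by
    have h1 : V ⊆ closure (V ∩ s) := hd.open_subset_closure_inter hV
    have h2 : V ∩ s ⊆ (↑) '' K := by
      rintro z ⟨hzV, hzs⟩
      exact ⟨⟨z, hzs⟩, hUK (hVU hzV), rfl⟩
    calc V ⊆ closure (V ∩ s) := h1
      _ ⊆ closure ((↑) '' K) := closure_mono h2
      _ = (↑) '' K := hKc'.isClosed.closure_eq
      _ ⊆ s := by rintro z ⟨k, -, rfl⟩; exact k.2
  exact Filter.mem_of_superset (hV.mem_nhds hxV) hVs

theorem aux_polish_of_lcsc (Y : Type*) [TopologicalSpace Y] [T2Space Y]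
    [LocallyCompactSpace Y] [SecondCountableTopology Y] : PolishSpace Y := by
  letI : MetricSpace Y := TopologicalSpace.metrizableSpaceMetric Y
  haveI : SecondCountableTopology (UniformSpace.Completion Y) :=
    UniformSpace.secondCountable_of_separable _
  haveI : PolishSpace (UniformSpace.Completion Y) := inferInstance
  have hiso : Isometry ((↑) : Y → UniformSpace.Completion Y) :=
    UniformSpace.Completion.coe_isometry
  have hemb := hiso.isEmbedding
  have e : Y ≃ₜ Set.range ((↑) : Y → UniformSpace.Completion Y) :=
    hemb.toHomeomorph
  haveI : LocallyCompactSpace (Set.range ((↑) : Y → UniformSpace.Completion Y)) :=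
    e.locallyCompactSpace_iff.mp ‹_›
  have hopen : IsOpen (Set.range ((↑) : Y → UniformSpace.Completion Y)) :=
    aux_isOpen_of_dense_lc (UniformSpace.Completion.denseRange_coe) ‹_›
  haveI : PolishSpace (Set.range ((↑) : Y → UniformSpace.Completion Y)) :=
    hopen.polishSpace
  exact e.isClosedEmbedding.polishSpace

theorem stmt12
    {G : Type*} [Group G] [TopologicalSpace G] [IsTopologicalGroup G]
    [LocallyCompactSpace G] [SecondCountableTopology G] [T2Space G]
    [MeasurableSpace G] [BorelSpace G]
    (G₁ G₂ : Subgroup G) (hG₁ : IsClosed (G₁ : Set G)) (hG₂ : IsClosed (G₂ : Set G))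
    {X : Type*} [TopologicalSpace X] [TopologicalSpace.MetrizableSpace X]
    [LocallyCompactSpace X] [SecondCountableTopology X]
    [MeasurableSpace X] [BorelSpace X]
    (π : G → X) (hπc : Continuous π) (hπo : IsOpenMap π) (hπs : Function.Surjective π)
    (act : X → G → X) (hactc : Continuous fun q : X × G => act q.1 q.2)
    (hact1 : ∀ x : X, act x 1 = x)
    (hactm : ∀ (x : X) (g g' : G), act (act x g) g' = act x (g * g'))
    (hπact : ∀ g g' : G, π (g * g') = act (π g) g')
    (hπker : ∀ g g' : G, π g = π g' ↔ ∃ h ∈ G₁, g' = h * g)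
    (x_c : G)
    (Gx : Subgroup ↥G₂)
    (hGx : ∀ t : ↥G₂, t ∈ Gx ↔ π (x_c * (t : G)) = π x_c)
    (mY : MeasurableSpace (Quotient (QuotientGroup.rightRel Gx)))
    (hmY : mY = borel (Quotient (QuotientGroup.rightRel Gx))) :
    ∃ ψ : Quotient (QuotientGroup.rightRel Gx) → X,
      (∀ t : ↥G₂, ψ (Quotient.mk (QuotientGroup.rightRel Gx) t) = π (x_c * (t : G))) ∧
      Function.Injective ψ ∧
      Continuous ψ ∧
      Set.range ψ = {y : X | ∃ η ∈ G₂, act (π x_c) η = y} ∧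
      (∀ t η : ↥G₂,
        ψ (Quotient.mk (QuotientGroup.rightRel Gx) (t * η))
          = act (ψ (Quotient.mk (QuotientGroup.rightRel Gx) t)) (η : G)) ∧
      MeasurableSet {y : X | ∃ η ∈ G₂, act (π x_c) η = y} ∧
      (∀ E : Set X, MeasurableSet E → MeasurableSet[mY] (ψ ⁻¹' E)) ∧
      (∀ E : Set (Quotient (QuotientGroup.rightRel Gx)),
        MeasurableSet[mY] E → MeasurableSet (ψ '' E)) := by
  subst hmY
  -- well-definedness
  have hwd : ∀ a b : ↥G₂, QuotientGroup.rightRel Gx a b →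
      π (x_c * (a : G)) = π (x_c * (b : G)) := by
    intro a b hab
    rw [QuotientGroup.rightRel_apply] at hab
    have h1 : π (x_c * ((b * a⁻¹ : ↥G₂) : G)) = π x_c := (hGx _).mp hab
    have h2 : ((b * a⁻¹ : ↥G₂) : G) = (b : G) * (a : G)⁻¹ := by push_cast; rfl
    rw [h2] at h1
    symm
    calc π (x_c * (b : G)) = π ((x_c * ((b : G) * (a : G)⁻¹)) * (a : G)) := by
          congr 1; group
      _ = act (π (x_c * ((b : G) * (a : G)⁻¹))) (a : G) := hπact _ _
      _ = act (π x_c) (a : G) := by rw [h1]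
      _ = π (x_c * (a : G)) := (hπact _ _).symm
  set ψ : Quotient (QuotientGroup.rightRel Gx) → X :=
    Quotient.lift (fun t : ↥G₂ => π (x_c * (t : G))) hwd with hψ
  have hformula : ∀ t : ↥G₂,
      ψ (Quotient.mk (QuotientGroup.rightRel Gx) t) = π (x_c * (t : G)) := fun t => rfl
  -- injectivity
  have hinj : Function.Injective ψ := by
    intro a b
    induction a using Quotient.ind with | _ a => ?_
    induction b using Quotient.ind with | _ b => ?_
    intro h
    have h' : π (x_c * (a : G)) = π (x_c * (b : G)) := h
    apply Quotient.sound
    show QuotientGroup.rightRel Gx a b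
    rw [QuotientGroup.rightRel_apply]
    rw [hGx]
    have h2 : ((b * a⁻¹ : ↥G₂) : G) = (b : G) * (a : G)⁻¹ := by push_cast; rfl
    rw [h2]
    calc π (x_c * ((b : G) * (a : G)⁻¹)) = π ((x_c * (b : G)) * (a : G)⁻¹) := by
          congr 1; group
      _ = act (π (x_c * (b : G))) (a : G)⁻¹ := hπact _ _
      _ = act (π (x_c * (a : G))) (a : G)⁻¹ := by rw [h']
      _ = π ((x_c * (a : G)) * (a : G)⁻¹) := (hπact _ _).symm
      _ = π x_c := by congr 1; group
  -- continuity
  have hcont : Continuous ψ := by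
    apply Continuous.quotient_lift
    exact hπc.comp (continuous_const.mul continuous_subtype_val)
  -- range
  have hrange : Set.range ψ = {y : X | ∃ η ∈ G₂, act (π x_c) η = y} := by
    ext y
    constructor
    · rintro ⟨q, rfl⟩
      obtain ⟨t, rfl⟩ := Quotient.exists_rep q
      exact ⟨(t : G), t.2, (hπact x_c (t : G)).symm⟩
    · rintro ⟨η, hη, rfl⟩
      exact ⟨Quotient.mk (QuotientGroup.rightRel Gx) ⟨η, hη⟩, (hπact x_c η).symm ▸ rfl⟩
  -- equivariance
  have heq : ∀ t η : ↥G₂,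
      ψ (Quotient.mk (QuotientGroup.rightRel Gx) (t * η))
        = act (ψ (Quotient.mk (QuotientGroup.rightRel Gx) t)) (η : G) := by
    intro t η
    rw [hformula, hformula]
    have h2 : ((t * η : ↥G₂) : G) = (t : G) * (η : G) := by push_cast; rfl
    rw [h2, ← mul_assoc, hπact]
  -- topology instances
  haveI : PolishSpace G := aux_polish_of_lcsc G
  haveI : LocallyCompactSpace ↥G₂ := hG₂.locallyCompactSpace
  haveI : PolishSpace ↥G₂ := hG₂.polishSpace
  have hmk_open : IsOpenMap (Quotient.mk (QuotientGroup.rightRel Gx)) := by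
    intro U hU
    have hsat : Quotient.mk (QuotientGroup.rightRel Gx) ⁻¹'
        (Quotient.mk (QuotientGroup.rightRel Gx) '' U)
        = ⋃ γ : Gx, (fun u : ↥G₂ => (γ : ↥G₂) * u) '' U := by
      ext x
      simp only [Set.mem_preimage, Set.mem_image, Set.mem_iUnion]
      constructor
      · rintro ⟨u, hu, h⟩
        have hr : x * u⁻¹ ∈ Gx := QuotientGroup.rightRel_apply.mp (Quotient.exact h)
        exact ⟨⟨x * u⁻¹, hr⟩, u, hu, by group⟩
      · rintro ⟨γ, u, hu, rfl⟩
        refine ⟨u, hu, Quotient.sound ?_⟩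
        show QuotientGroup.rightRel Gx u ((γ : ↥G₂) * u)
        rw [QuotientGroup.rightRel_apply]
        simpa [mul_assoc] using γ.2
    have hopen : IsOpen (Quotient.mk (QuotientGroup.rightRel Gx) ⁻¹'
        (Quotient.mk (QuotientGroup.rightRel Gx) '' U)) := by
      rw [hsat]
      exact isOpen_iUnion fun γ => (Homeomorph.mulLeft (γ : ↥G₂)).isOpenMap U hU
    exact isQuotientMap_quot_mk.isOpen_preimage.mp hopen
  have hoq : IsOpenQuotientMap (Quotient.mk (QuotientGroup.rightRel Gx)) :=
    ⟨fun q => Quotient.exists_rep q, continuous_quot_mk, hmk_open⟩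
  haveI : LocallyCompactSpace (Quotient (QuotientGroup.rightRel Gx)) :=
    hoq.locallyCompactSpace
  haveI : SecondCountableTopology (Quotient (QuotientGroup.rightRel Gx)) :=
    hoq.isQuotientMap.secondCountableTopology hmk_open
  haveI : T2Space (Quotient (QuotientGroup.rightRel Gx)) := by
    constructor
    intro a b hab
    obtain ⟨U, V, hU, hV, haU, hbV, hUV⟩ := t2_separation (hinj.ne hab)
    exact ⟨ψ ⁻¹' U, ψ ⁻¹' V, hU.preimage hcont, hV.preimage hcont, haU, hbV,
      hUV.preimage ψ⟩
  haveI : PolishSpace (Quotient (QuotientGroup.rightRel Gx)) :=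
    aux_polish_of_lcsc _
  letI : MeasurableSpace (Quotient (QuotientGroup.rightRel Gx)) :=
    borel (Quotient (QuotientGroup.rightRel Gx))
  haveI : BorelSpace (Quotient (QuotientGroup.rightRel Gx)) := ⟨rfl⟩
  have hemb : MeasurableEmbedding ψ := hcont.measurableEmbedding hinj
  refine ⟨ψ, hformula, hinj, hcont, hrange, heq, ?_,
    fun E hE => hemb.measurable hE, fun E hE => hemb.measurableSet_image.mpr hE⟩
  rw [← hrange]
  exact hemb.measurableSet_range
end

section
/- The map (ξ,η) ↦ ξx₀η from G₁ × G₂ onto the double coset G₁x₀G₂ is constant exactly on the left G₄-cosets in G₃: ξ₁x₀η₁ = ξ₂x₀η₂ holds if and only if (ξ₂,η₂)⁻¹(ξ₁,η₁) ∈ G₄ (product taken in G₃). It therefore induces a bijection of the coset space G₃/G₄ onto G₁x₀G₂; this bijection is continuous and a Borel isomorphism onto its image: it maps Borel subsets of G₃/G₄ onto Borel subsets of G. In particular every double coset G₁x₀G₂ is a Borel subset of G. -/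
open MeasureTheory Set
open scoped ENNReal Pointwise

/-- A locally compact second-countable Hausdorff space is Polish. -/
theorem lcsc_polish {X : Type*} [TopologicalSpace X] [LocallyCompactSpace X]
    [SecondCountableTopology X] [T2Space X] : PolishSpace X := by
  letI : MetricSpace X := TopologicalSpace.metrizableSpaceMetric X
  haveI : SecondCountableTopology (UniformSpace.Completion X) :=
    UniformSpace.secondCountable_of_separable _
  haveI : PolishSpace (UniformSpace.Completion X) := inferInstance
  set e : X → UniformSpace.Completion X := (↑) with he_def
  have hiso : Isometry e := UniformSpace.Completion.coe_isometry
  have he : Topology.IsEmbedding e := hiso.isEmbedding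
  have hdense : Dense (Set.range e) := UniformSpace.Completion.denseRange_coe
  have hopen : IsOpen (Set.range e) := by
    rw [isOpen_iff_mem_nhds]
    rintro _ ⟨x, rfl⟩
    obtain ⟨K, hKc, hK⟩ := exists_compact_mem_nhds x
    obtain ⟨U, hUK, hU, hxU⟩ := mem_nhds_iff.1 hK
    obtain ⟨V, hV, hVU⟩ := he.isOpen_iff.1 hU
    have hsub : V ∩ Set.range e ⊆ e '' K := by
      rintro _ ⟨hv, x', rfl⟩
      exact Set.mem_image_of_mem e (hUK (by rw [← hVU]; exact hv))
    have hclosed : IsClosed (e '' K) := (hKc.image he.continuous).isClosed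
    have hVsub : V ⊆ Set.range e := by
      calc V ⊆ closure (V ∩ Set.range e) := hdense.open_subset_closure_inter hV
        _ ⊆ closure (e '' K) := closure_mono hsub
        _ = e '' K := hclosed.closure_eq
        _ ⊆ Set.range e := Set.image_subset_range _ _
    exact Filter.mem_of_superset (hV.mem_nhds (by rw [← hVU] at hxU; exact hxU)) hVsub
  haveI : PolishSpace (Set.range e) := hopen.polishSpace
  exact (he.toHomeomorph).isClosedEmbedding.polishSpace

theorem stmt13
    {G : Type*} [Group G] [TopologicalSpace G] [IsTopologicalGroup G]
    [LocallyCompactSpace G] [SecondCountableTopology G] [T2Space G]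
    [MeasurableSpace G] [BorelSpace G]
    (G₁ G₂ : Subgroup G) (hG₁ : IsClosed (G₁ : Set G)) (hG₂ : IsClosed (G₂ : Set G))
    (x₀ : G) :
    (∀ (ξ₁ ξ₂ : ↥G₁) (η₁ η₂ : ↥G₂),
      (ξ₁ : G) * x₀ * (η₁ : G) = (ξ₂ : G) * x₀ * (η₂ : G) ↔
        ∃ ζ : G, ζ ∈ G₁ ∧ (∃ w ∈ G₂, ζ = x₀ * w * x₀⁻¹) ∧
          (ξ₂ : G)⁻¹ * (ξ₁ : G) = ζ ∧ (η₁ : G) * (η₂ : G)⁻¹ = x₀⁻¹ * ζ⁻¹ * x₀) ∧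
    Continuous (fun q : ↥G₁ × ↥G₂ => (q.1 : G) * x₀ * (q.2 : G)) ∧
    Set.range (fun q : ↥G₁ × ↥G₂ => (q.1 : G) * x₀ * (q.2 : G))
      = {g : G | ∃ ξ ∈ G₁, ∃ η ∈ G₂, g = ξ * x₀ * η} ∧
    (∀ E : Set (↥G₁ × ↥G₂), MeasurableSet E →
      (∀ q ∈ E, ∀ (ζ : ↥G₁) (w : ↥G₂), (w : G) = x₀⁻¹ * (ζ : G)⁻¹ * x₀ →
        (q.1 * ζ, w * q.2) ∈ E) →
      MeasurableSet ((fun q : ↥G₁ × ↥G₂ => (q.1 : G) * x₀ * (q.2 : G)) '' E)) ∧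
    MeasurableSet {g : G | ∃ ξ ∈ G₁, ∃ η ∈ G₂, g = ξ * x₀ * η} := by
  haveI : PolishSpace G := lcsc_polish
  haveI pol1 : PolishSpace ↥G₁ := hG₁.polishSpace
  haveI pol2 : PolishSpace ↥G₂ := hG₂.polishSpace
  haveI bor1 : BorelSpace ↥G₁ := Subtype.borelSpace (G₁ : Set G)
  haveI bor2 : BorelSpace ↥G₂ := Subtype.borelSpace (G₂ : Set G)
  haveI sc1 : SigmaCompactSpace ↥G₁ := isSigmaCompact_iff_sigmaCompactSpace.1
    (isSigmaCompact_univ.of_isClosed_subset hG₁ (Set.subset_univ _))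
  haveI sc2 : SigmaCompactSpace ↥G₂ := isSigmaCompact_iff_sigmaCompactSpace.1
    (isSigmaCompact_univ.of_isClosed_subset hG₂ (Set.subset_univ _))
  set φ : ↥G₁ × ↥G₂ → G := fun q => (q.1 : G) * x₀ * (q.2 : G) with hφ
  have hcont : Continuous φ := by
    exact ((continuous_subtype_val.comp continuous_fst).mul continuous_const).mul
      (continuous_subtype_val.comp continuous_snd)
  -- measurability of the range
  have hrange : MeasurableSet (Set.range φ) := by
    obtain ⟨K, hK, hKeq⟩ := isSigmaCompact_range hcont
    rw [← hKeq]
    exact MeasurableSet.iUnion fun n => (hK n).measurableSet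
  -- the range equality
  have hrangeEq : Set.range φ = {g : G | ∃ ξ ∈ G₁, ∃ η ∈ G₂, g = ξ * x₀ * η} := by
    ext g
    constructor
    · rintro ⟨⟨ξ, η⟩, rfl⟩
      exact ⟨ξ, ξ.2, η, η.2, rfl⟩
    · rintro ⟨ξ, hξ, η, hη, rfl⟩
      exact ⟨(⟨ξ, hξ⟩, ⟨η, hη⟩), rfl⟩
  refine ⟨?_, hcont, hrangeEq, ?_, by rw [← hrangeEq]; exact hrange⟩
  · -- the algebraic characterization
    intro ξ₁ ξ₂ η₁ η₂
    constructor
    · intro h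
      have hx : (ξ₁ : G) = (ξ₂ : G) * x₀ * (η₂ : G) * (η₁ : G)⁻¹ * x₀⁻¹ := by
        rw [← h]; group
      refine ⟨(ξ₂ : G)⁻¹ * (ξ₁ : G), G₁.mul_mem (G₁.inv_mem ξ₂.2) ξ₁.2,
        ⟨(η₂ : G) * (η₁ : G)⁻¹, G₂.mul_mem η₂.2 (G₂.inv_mem η₁.2), by rw [hx]; group⟩,
        rfl, by rw [hx]; group⟩
    · rintro ⟨ζ, hζ₁, ⟨w, hw, rfl⟩, h1, h2⟩
      have hx : (ξ₁ : G) = (ξ₂ : G) * (x₀ * w * x₀⁻¹) := by rw [← h1]; group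
      have hy : (η₁ : G) = (x₀⁻¹ * (x₀ * w * x₀⁻¹)⁻¹ * x₀) * (η₂ : G) := by
        rw [← h2]; group
      rw [hx, hy]; group
  · -- images of invariant measurable sets are measurable
    intro E hE hinv
    have hsat : ∀ q q' : ↥G₁ × ↥G₂, φ q = φ q' → q ∈ E → q' ∈ E := by
      rintro ⟨ξ₂, η₂⟩ ⟨ξ₁, η₁⟩ heq hq
      have hx : (ξ₁ : G) = (ξ₂ : G) * x₀ * (η₂ : G) * (η₁ : G)⁻¹ * x₀⁻¹ := by
        rw [show (ξ₂ : G) * x₀ * (η₂ : G) = (ξ₁ : G) * x₀ * (η₁ : G) from heq]; group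
      have hw : ((η₁ * η₂⁻¹ : ↥G₂) : G) = x₀⁻¹ * ((ξ₂⁻¹ * ξ₁ : ↥G₁) : G)⁻¹ * x₀ := by
        push_cast
        rw [hx]; group
      have h2 := hinv (ξ₂, η₂) hq (ξ₂⁻¹ * ξ₁) (η₁ * η₂⁻¹) hw
      simpa [mul_inv_cancel_left, inv_mul_cancel_right] using h2
    have hA : AnalyticSet (φ '' E) := hE.analyticSet_image hcont.measurable
    have hA' : AnalyticSet (φ '' Eᶜ) := hE.compl.analyticSet_image hcont.measurable
    have hdisj : Disjoint (φ '' E) (φ '' Eᶜ) := by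
      rw [Set.disjoint_left]
      rintro _ ⟨a, ha, rfl⟩ ⟨b, hb, hba⟩
      exact hb (hsat a b hba.symm ha)
    obtain ⟨B, hEB, hdisjB, hB⟩ := hA.measurablySeparable hA' hdisj
    have himg : φ '' E = B ∩ Set.range φ := by
      apply Set.Subset.antisymm
      · exact Set.subset_inter hEB (Set.image_subset_range _ _)
      · rintro g ⟨hgB, q, rfl⟩
        by_contra hc
        exact (Set.disjoint_left.1 hdisjB)
          (Set.mem_image_of_mem φ (fun hqE => hc (Set.mem_image_of_mem φ hqE) : q ∈ Eᶜ)) hgB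
    exact himg ▸ hB.inter hrange
end

section
/- Let g : G₂ → H_L be weakly Borel and satisfy g(ηt) = L_{x_c η x_c⁻¹}(g(t)) for all η ∈ G_{x_c} and t ∈ G₂. Then the prescription f(ξ x_c t) := L_ξ(g(t)) for ξ ∈ G₁, t ∈ G₂ yields a well-defined function f on the double coset G₁x_cG₂ (i.e. if ξ₁x_ct₁ = ξ₂x_ct₂ then L_{ξ₁}(g(t₁)) = L_{ξ₂}(g(t₂))); this f is weakly Borel on G₁x_cG₂, satisfies f(ξx) = L_ξ(f(x)) for all ξ ∈ G₁ and x ∈ G₁x_cG₂, and its restriction t ↦ f(x_c t) equals g. Conversely, for every weakly Borel f : G₁x_cG₂ → H_L with f(ξx) = L_ξ(f(x)) for all ξ ∈ G₁, the function g(t) := f(x_c t) is weakly Borel on G₂ and satisfies g(ηt) = L_{x_c η x_c⁻¹}(g(t)) for η ∈ G_{x_c}. Thus f ↦ (t ↦ f(x_c t)) is a one-to-one correspondence between these two classes of functions. -/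
open MeasureTheory Set
open scoped ENNReal Pointwise

def doubleCoset {G : Type*} [Group G] (G₁ G₂ : Subgroup G) (x_c : G) : Set G :=
  {y : G | ∃ ξ ∈ G₁, ∃ t ∈ G₂, y = ξ * x_c * t}

/-- A locally compact, second countable, Hausdorff space is Polish. -/
theorem polish_of_lcsc (X : Type*) [TopologicalSpace X] [LocallyCompactSpace X]
    [SecondCountableTopology X] [T2Space X] : PolishSpace X := by
  letI : MetricSpace X := TopologicalSpace.metrizableSpaceMetric X
  haveI : SecondCountableTopology (UniformSpace.Completion X) :=
    UniformSpace.secondCountable_of_separable _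
  have hiso : Isometry ((↑) : X → UniformSpace.Completion X) :=
    UniformSpace.Completion.coe_isometry
  have hemb := hiso.isEmbedding
  have hopen : IsOpen (range ((↑) : X → UniformSpace.Completion X)) := by
    rw [isOpen_iff_mem_nhds]
    rintro _ ⟨x, rfl⟩
    obtain ⟨K, hK, hKnhds⟩ := exists_compact_mem_nhds x
    have h1 : ((↑) '' K : Set (UniformSpace.Completion X)) ∈
        nhdsWithin (↑x) (range ((↑) : X → UniformSpace.Completion X)) := by
      rw [← hemb.map_nhds_eq]
      exact Filter.image_mem_map hKnhds
    obtain ⟨U, hUo, hxU, hU⟩ := mem_nhdsWithin.mp h1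
    have hdense : Dense (range ((↑) : X → UniformSpace.Completion X)) :=
      UniformSpace.Completion.denseRange_coe
    have h2 : U ⊆ closure (U ∩ range ((↑) : X → UniformSpace.Completion X)) :=
      hdense.open_subset_closure_inter hUo
    have hsub : U ⊆ range ((↑) : X → UniformSpace.Completion X) := by
      refine h2.trans ((closure_mono hU).trans ?_)
      rw [(hK.image hiso.continuous).isClosed.closure_eq]
      exact image_subset_range _ _
    exact Filter.mem_of_superset (hUo.mem_nhds hxU) hsub
  haveI : PolishSpace (range ((↑) : X → UniformSpace.Completion X)) := hopen.polishSpace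
  exact hemb.toHomeomorph.isClosedEmbedding.polishSpace

theorem stmt14
    {G : Type*} [Group G] [TopologicalSpace G] [IsTopologicalGroup G]
    [LocallyCompactSpace G] [SecondCountableTopology G] [T2Space G]
    [MeasurableSpace G] [BorelSpace G]
    (G₁ G₂ : Subgroup G) (hG₁ : IsClosed (G₁ : Set G)) (hG₂ : IsClosed (G₂ : Set G))
    (x_c : G)
    {H : Type*} [NormedAddCommGroup H] [InnerProductSpace ℂ H] [CompleteSpace H]
    [SecondCountableTopology H]
    (L : ↥G₁ → H →L[ℂ] H)
    (hL1 : L 1 = ContinuousLinearMap.id ℂ H)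
    (hLmul : ∀ a b : ↥G₁, L (a * b) = (L a).comp (L b))
    (hLcont : ∀ v : H, Continuous fun h : ↥G₁ => L h v)
    (g : ↥G₂ → H)
    (hgB : ∀ v : H, Measurable fun t : ↥G₂ => (inner ℂ v (g t) : ℂ))
    (hgcov : ∀ (η t : ↥G₂) (hη : x_c * (η : G) * x_c⁻¹ ∈ G₁),
      g (η * t) = L ⟨x_c * (η : G) * x_c⁻¹, hη⟩ (g t)) :
    (∀ (ξ₁ ξ₂ : ↥G₁) (t₁ t₂ : ↥G₂),
        (ξ₁ : G) * x_c * (t₁ : G) = (ξ₂ : G) * x_c * (t₂ : G) →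
        L ξ₁ (g t₁) = L ξ₂ (g t₂)) ∧
    (∃ f : G → H,
      (∀ (ξ : ↥G₁) (t : ↥G₂), f ((ξ : G) * x_c * (t : G)) = L ξ (g t)) ∧
      (∀ v : H, Measurable fun d : ↥(doubleCoset G₁ G₂ x_c) => (inner ℂ v (f (d : G)) : ℂ)) ∧
      (∀ (ξ : ↥G₁) (x : G), x ∈ doubleCoset G₁ G₂ x_c → f ((ξ : G) * x) = L ξ (f x)) ∧
      (∀ t : ↥G₂, f (x_c * (t : G)) = g t)) ∧
    (∀ f : G → H,
      (∀ v : H, Measurable fun d : ↥(doubleCoset G₁ G₂ x_c) => (inner ℂ v (f (d : G)) : ℂ)) →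
      (∀ (ξ : ↥G₁) (x : G), x ∈ doubleCoset G₁ G₂ x_c → f ((ξ : G) * x) = L ξ (f x)) →
      ((∀ v : H, Measurable fun t : ↥G₂ => (inner ℂ v (f (x_c * (t : G))) : ℂ)) ∧
        (∀ (η t : ↥G₂) (hη : x_c * (η : G) * x_c⁻¹ ∈ G₁),
          f (x_c * ((η * t : ↥G₂) : G))
            = L ⟨x_c * (η : G) * x_c⁻¹, hη⟩ (f (x_c * (t : G)))))) ∧
    (∀ f f' : G → H,
      (∀ (ξ : ↥G₁) (x : G), x ∈ doubleCoset G₁ G₂ x_c → f ((ξ : G) * x) = L ξ (f x)) →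
      (∀ (ξ : ↥G₁) (x : G), x ∈ doubleCoset G₁ G₂ x_c → f' ((ξ : G) * x) = L ξ (f' x)) →
      (∀ t : ↥G₂, f (x_c * (t : G)) = f' (x_c * (t : G))) →
      ∀ x ∈ doubleCoset G₁ G₂ x_c, f x = f' x) := by
  classical
  -- well-definedness
  have wd : ∀ (ξ₁ ξ₂ : ↥G₁) (t₁ t₂ : ↥G₂),
      (ξ₁ : G) * x_c * (t₁ : G) = (ξ₂ : G) * x_c * (t₂ : G) →
      L ξ₁ (g t₁) = L ξ₂ (g t₂) := by
    intro ξ₁ ξ₂ t₁ t₂ h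
    have key : x_c * ((t₁ : G) * (t₂ : G)⁻¹) * x_c⁻¹ = (ξ₁ : G)⁻¹ * (ξ₂ : G) := by
      calc x_c * ((t₁ : G) * (t₂ : G)⁻¹) * x_c⁻¹
          = (ξ₁ : G)⁻¹ * ((ξ₁ : G) * x_c * (t₁ : G)) * ((t₂ : G)⁻¹ * x_c⁻¹) := by group
        _ = (ξ₁ : G)⁻¹ * ((ξ₂ : G) * x_c * (t₂ : G)) * ((t₂ : G)⁻¹ * x_c⁻¹) := by rw [h]
        _ = (ξ₁ : G)⁻¹ * (ξ₂ : G) := by group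
    have hη : x_c * ((t₁ * t₂⁻¹ : ↥G₂) : G) * x_c⁻¹ ∈ G₁ := by
      have hcoe : ((t₁ * t₂⁻¹ : ↥G₂) : G) = (t₁ : G) * (t₂ : G)⁻¹ := by
        push_cast; rfl
      rw [hcoe, key]
      exact mul_mem (inv_mem ξ₁.2) ξ₂.2
    have h2 := hgcov (t₁ * t₂⁻¹) t₂ hη
    have h3 : (t₁ * t₂⁻¹) * t₂ = t₁ := by group
    rw [h3] at h2
    have h4 : (⟨x_c * ((t₁ * t₂⁻¹ : ↥G₂) : G) * x_c⁻¹, hη⟩ : ↥G₁) = ξ₁⁻¹ * ξ₂ := by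
      apply Subtype.ext
      push_cast
      exact key
    rw [h4] at h2
    rw [h2, ← ContinuousLinearMap.comp_apply, ← hLmul, mul_inv_cancel_left]
  -- instances
  haveI : PolishSpace G := polish_of_lcsc G
  haveI hP1 : PolishSpace ↥G₁ := hG₁.polishSpace
  haveI hP2 : PolishSpace ↥G₂ := hG₂.polishSpace
  haveI hB1 : BorelSpace ↥G₁ := Subtype.borelSpace (G₁ : Set G)
  haveI hB2 : BorelSpace ↥G₂ := Subtype.borelSpace (G₂ : Set G)
  -- the parametrization map
  set p : ↥G₁ × ↥G₂ → G := fun q => (q.1 : G) * x_c * (q.2 : G) with hpdef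
  have hp : Measurable p := by
    apply Continuous.measurable
    exact ((continuous_subtype_val.comp continuous_fst).mul continuous_const).mul
      (continuous_subtype_val.comp continuous_snd)
  -- the definition of f
  set f : G → H := fun x =>
    if h : ∃ q : ↥G₁ × ↥G₂, p q = x then L h.choose.1 (g h.choose.2) else 0 with hfdef
  have hf : ∀ (ξ : ↥G₁) (t : ↥G₂), f ((ξ : G) * x_c * (t : G)) = L ξ (g t) := by
    intro ξ t
    have hex : ∃ q : ↥G₁ × ↥G₂, p q = (ξ : G) * x_c * (t : G) := ⟨(ξ, t), rfl⟩
    have : f ((ξ : G) * x_c * (t : G))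
        = L hex.choose.1 (g hex.choose.2) := by
      rw [hfdef]; exact dif_pos hex
    rw [this]
    exact wd _ _ _ _ hex.choose_spec
  refine ⟨wd, ⟨f, hf, ?_, ?_, ?_⟩, ?_, ?_⟩
  · -- measurability of f
    intro v
    have hu : Measurable (fun q : ↥G₁ × ↥G₂ => (inner ℂ v (f (p q)) : ℂ)) := by
      have heq : (fun q : ↥G₁ × ↥G₂ => (inner ℂ v (f (p q)) : ℂ))
          = Function.uncurry (fun (ξ : ↥G₁) (t : ↥G₂) => (inner ℂ v (L ξ (g t)) : ℂ)) := by
        funext q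
        exact congrArg (fun w => (inner ℂ v w : ℂ)) (hf q.1 q.2)
      rw [heq]
      apply measurable_uncurry_of_continuous_of_measurable
      · intro t
        exact continuous_const.inner (hLcont (g t))
      · intro ξ
        have heq2 : (fun t : ↥G₂ => (inner ℂ v (L ξ (g t)) : ℂ))
            = fun t : ↥G₂ => (inner ℂ ((ContinuousLinearMap.adjoint (L ξ)) v) (g t) : ℂ) := by
          funext t
          rw [ContinuousLinearMap.adjoint_inner_left]
        rw [heq2]
        exact hgB _
    have hrestr :=
      (Measurable.measurable_comp_iff_restrict hp
        (g := fun x : G => (inner ℂ v (f x) : ℂ))).mp hu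
    have hrange : range p = doubleCoset G₁ G₂ x_c := by
      ext y
      constructor
      · rintro ⟨⟨ξ, t⟩, rfl⟩
        exact ⟨ξ, ξ.2, t, t.2, rfl⟩
      · rintro ⟨ξ, hξ, t, ht, rfl⟩
        exact ⟨(⟨ξ, hξ⟩, ⟨t, ht⟩), rfl⟩
    have hmk : Measurable fun d : ↥(doubleCoset G₁ G₂ x_c) =>
        (⟨(d : G), hrange.symm ▸ d.2⟩ : ↥(range p)) :=
      measurable_subtype_coe.subtype_mk
    exact hrestr.comp hmk
  · -- equivariance of f
    rintro ξ x ⟨ξ₁, hξ₁, t₁, ht₁, rfl⟩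
    have e1 : (ξ : G) * (ξ₁ * x_c * t₁)
        = ((ξ * ⟨ξ₁, hξ₁⟩ : ↥G₁) : G) * x_c * ((⟨t₁, ht₁⟩ : ↥G₂) : G) := by
      push_cast; group
    calc f ((ξ : G) * (ξ₁ * x_c * t₁))
        = L (ξ * ⟨ξ₁, hξ₁⟩) (g ⟨t₁, ht₁⟩) := by rw [e1]; exact hf _ _
      _ = L ξ (L ⟨ξ₁, hξ₁⟩ (g ⟨t₁, ht₁⟩)) := by rw [hLmul]; rfl
      _ = L ξ (f (ξ₁ * x_c * t₁)) := congrArg (L ξ) (hf ⟨ξ₁, hξ₁⟩ ⟨t₁, ht₁⟩).symm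
  · -- restriction of f is g
    intro t
    have e1 : x_c * (t : G) = ((1 : ↥G₁) : G) * x_c * (t : G) := by
      rw [OneMemClass.coe_one, one_mul]
    rw [e1, hf 1 t, hL1]
    rfl
  · -- converse direction
    intro f' hfB hfequiv
    constructor
    · intro v
      have hmk : Measurable fun t : ↥G₂ =>
          (⟨x_c * (t : G), ⟨1, one_mem _, t, t.2, by rw [one_mul]⟩⟩ :
            ↥(doubleCoset G₁ G₂ x_c)) := by
        apply Continuous.measurable
        exact (continuous_const.mul continuous_subtype_val).subtype_mk _
      exact (hfB v).comp hmk
    · intro η t hη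
      have hmem : x_c * (t : G) ∈ doubleCoset G₁ G₂ x_c :=
        ⟨1, one_mem _, t, t.2, by rw [one_mul]⟩
      have h1 := hfequiv ⟨x_c * (η : G) * x_c⁻¹, hη⟩ (x_c * (t : G)) hmem
      have e1 : x_c * ((η * t : ↥G₂) : G)
          = (x_c * (η : G) * x_c⁻¹) * (x_c * (t : G)) := by
        push_cast; group
      rw [e1]
      exact h1
  · -- uniqueness
    rintro f₁ f₂ h1e h2e hagree x ⟨ξ, hξ, t, ht, rfl⟩
    have hmem : x_c * t ∈ doubleCoset G₁ G₂ x_c :=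
      ⟨1, one_mem _, t, ht, by rw [one_mul]⟩
    rw [mul_assoc]
    have h1 := h1e ⟨ξ, hξ⟩ (x_c * t) hmem
    have h2 := h2e ⟨ξ, hξ⟩ (x_c * t) hmem
    have h3 := hagree ⟨t, ht⟩
    exact h1.trans ((congrArg (L ⟨ξ, hξ⟩) h3).trans h2.symm)
end
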